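/- arXiv:1610.06341 — 15 statements merged into one kernel-verified Lean document; each statement's English description precedes it below -/
import Mathlib

section
/- The map δ_P : [0,∞] × 𝒫([0,∞]) → [0,∞] defined by δ_P(x,A) = x ⊖ sup A for nonempty A and δ_P(x,∅) = ∞ is an approach distance, i.e., it satisfies (A1) δ_P(x,{x})=0, (A2) δ_P(x,∅)=∞, (A3) δ_P(x, A∪B)=min(δ_P(x,A), δ_P(x,B)), and (A4) δ_P(x,A) ≤ δ_P(x,B) + sup_{b∈B} δ_P(b,A). -/
open ENNReal

universe u

structure GMetric (X : Type u) where
  d : X → X → ℝ≥0∞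
  refl : ∀ x, d x x = 0
  triangle : ∀ x y z, d x z ≤ d x y + d y z

variable {X : Type u}

/-- Weight of a generalized metric space. -/
def IsWeight (m : GMetric X) (φ : X → ℝ≥0∞) : Prop := ∀ x y, φ x ≤ φ y + m.d x y

/-- Coweight of a generalized metric space. -/
def IsCoweight (m : GMetric X) (ψ : X → ℝ≥0∞) : Prop := ∀ x y, ψ y ≤ ψ x + m.d x y

/-- The metric on weights: d̄(φ,ψ) = sup_x (ψ x ⊖ φ x). -/
noncomputable def dbar (φ ψ : X → ℝ≥0∞) : ℝ≥0∞ := ⨆ x, ψ x - φ x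

/-- A directed index: nonempty, preordered and directed. -/
def DirIdx {ι : Type*} (le : ι → ι → Prop) : Prop :=
  Nonempty ι ∧ Reflexive le ∧ Transitive le ∧ ∀ i j, ∃ k, le i k ∧ le j k

/-- Forward Cauchy net. -/
def ForwardCauchy {ι : Type*} (m : GMetric X) (le : ι → ι → Prop) (x : ι → X) : Prop :=
  DirIdx le ∧ (⨅ i, ⨆ j, ⨆ (_ : le i j), ⨆ k, ⨆ (_ : le j k), m.d (x j) (x k)) = 0

/-- Yoneda limit of a net. -/
def YonedaLimit {ι : Type*} (m : GMetric X) (le : ι → ι → Prop) (x : ι → X) (a : X) : Prop :=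
  ∀ y, m.d a y = ⨅ i, ⨆ j, ⨆ (_ : le i j), m.d (x j) y

/-- Scott weight. -/
def ScottWeight (m : GMetric X) (φ : X → ℝ≥0∞) : Prop :=
  IsWeight m φ ∧ ∀ (ι : Type u) (le : ι → ι → Prop) (x : ι → X) (a : X),
    ForwardCauchy m le x → YonedaLimit m le x a →
    φ a ≤ ⨅ i, ⨆ j, ⨆ (_ : le i j), φ (x j)

/-- The Scott approach distance. -/
noncomputable def scottDist (m : GMetric X) (x : X) (A : Set X) : ℝ≥0∞ :=
  ⨆ (φ : X → ℝ≥0∞) (_ : ScottWeight m φ ∧ ∀ a ∈ A, φ a = 0), φ x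

/-- Tensor product of a weight and a coweight. -/
noncomputable def tensor (φ ψ : X → ℝ≥0∞) : ℝ≥0∞ := ⨅ x, φ x + ψ x

/-- Flat weight. -/
def FlatWeight (m : GMetric X) (φ : X → ℝ≥0∞) : Prop :=
  IsWeight m φ ∧ (⨅ x, φ x) = 0 ∧
  ∀ ψ₁ ψ₂, IsCoweight m ψ₁ → IsCoweight m ψ₂ →
    tensor φ (fun x => max (ψ₁ x) (ψ₂ x)) = max (tensor φ ψ₁) (tensor φ ψ₂)

/-- Colimit of a weight. -/
def IsColimit (m : GMetric X) (φ : X → ℝ≥0∞) (a : X) : Prop :=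
  ∀ y, dbar φ (fun z => m.d z y) = m.d a y

/-- Compact element. -/
def IsCompactElem (m : GMetric X) (a : X) : Prop :=
  ∀ (ι : Type u) (le : ι → ι → Prop) (x : ι → X) (b : X),
    ForwardCauchy m le x → YonedaLimit m le x b →
    m.d a b = ⨅ i, ⨆ j, ⨆ (_ : le i j), m.d a (x j)

/-- Approach space axioms. -/
def A1 (δ : X → Set X → ℝ≥0∞) : Prop := ∀ x, δ x {x} = 0
def A2 (δ : X → Set X → ℝ≥0∞) : Prop := ∀ x, δ x (∅ : Set X) = ∞
def A3 (δ : X → Set X → ℝ≥0∞) : Prop := ∀ x A B, δ x (A ∪ B) = min (δ x A) (δ x B)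
def A4 (δ : X → Set X → ℝ≥0∞) : Prop := ∀ x A B, δ x A ≤ δ x B + ⨆ b ∈ B, δ b A

/-- Regular function of an approach space. -/
def IsRegularFn (δ : X → Set X → ℝ≥0∞) (φ : X → ℝ≥0∞) : Prop :=
  ∀ x A, φ x - (⨆ a ∈ A, φ a) ≤ δ x A

/-- The Lawvere metric d_L(a,b) = b ⊖ a on [0,∞]. -/
noncomputable def dL : GMetric ℝ≥0∞ where
  d a b := b - a
  refl x := tsub_self x
  triangle x y z := by
    calc z - x ≤ z - y + (y - x) := tsub_le_tsub_add_tsub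
    _ = (y - x) + (z - y) := add_comm _ _

/-- The opposite Lawvere metric d_R(a,b) = a ⊖ b on [0,∞]. -/
noncomputable def dR : GMetric ℝ≥0∞ where
  d a b := a - b
  refl x := tsub_self x
  triangle _ _ _ := tsub_le_tsub_add_tsub

/-- Order on formal balls. -/
def ballLE (m : GMetric X) (p q : X × ℝ≥0∞) : Prop := q.2 + m.d p.1 q.1 ≤ p.2

open Classical in
/-- δ_P(x,A) = x ⊖ sup A for nonempty A, ∞ for A = ∅. -/
noncomputable def deltaP : ℝ≥0∞ → Set ℝ≥0∞ → ℝ≥0∞ :=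
  fun x A => if A.Nonempty then x - sSup A else ∞

private lemma sub_max (a b c : ℝ≥0∞) : a - max b c = min (a - b) (a - c) := by
  rcases le_total b c with h | h
  · simp [max_eq_right h, min_eq_right (tsub_le_tsub_left h a)]
  · simp [max_eq_left h, min_eq_left (tsub_le_tsub_left h a)]

private lemma sSup_sub' (B : Set ℝ≥0∞) (c : ℝ≥0∞) : sSup B - c = ⨆ b ∈ B, b - c := by
  rw [sSup_eq_iSup', ENNReal.iSup_sub, iSup_subtype']

/-- δ_P is an approach distance on [0,∞]. -/
theorem stmt1 : A1 deltaP ∧ A2 deltaP ∧ A3 deltaP ∧ A4 deltaP := by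
  refine ⟨fun x => ?_, fun x => ?_, fun x A B => ?_, fun x A B => ?_⟩
  · simp [deltaP, Set.singleton_nonempty]
  · simp [deltaP]
  · rcases A.eq_empty_or_nonempty with rfl | hA
    · rcases B.eq_empty_or_nonempty with rfl | hB
      · simp [deltaP]
      · simp [deltaP, hB]
    · rcases B.eq_empty_or_nonempty with rfl | hB
      · simp [deltaP, hA]
      · simp only [deltaP, hA, hB, Set.Nonempty.inl hA, if_true,
          sSup_union]
        exact sub_max x _ _
  · rcases B.eq_empty_or_nonempty with rfl | hB
    · simp [deltaP]
    · rcases A.eq_empty_or_nonempty with rfl | hA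
      · obtain ⟨b, hb⟩ := hB
        have : (⨆ b ∈ B, deltaP b (∅ : Set ℝ≥0∞)) = ∞ := by
          refine top_le_iff.mp ?_
          calc (∞ : ℝ≥0∞) = deltaP b ∅ := by simp [deltaP]
          _ ≤ _ := le_biSup (fun b => deltaP b (∅ : Set ℝ≥0∞)) hb
        rw [this, add_top]
        exact le_top
      · simp only [deltaP, hA, hB, if_true]
        have h1 : x - sSup A ≤ (x - sSup B) + (sSup B - sSup A) :=
          tsub_le_tsub_add_tsub
        refine h1.trans (add_le_add_right ?_ _)
        rw [sSup_sub' B (sSup A)]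
end

section
/- Let S ⊆ [0,∞]^X satisfy: (R1) S is closed under pointwise suprema of arbitrary families, (R2) S is closed under binary pointwise minima, (R3) for φ ∈ S and r ∈ [0,∞], both φ + r and φ ⊖ r are in S. Define δ(x,A) = sup{φ(x) | φ ∈ S and φ(a) = 0 for all a ∈ A}. Then (X,δ) is an approach space whose set of regular functions equals S. -/
open ENNReal

universe u

variable {X : Type u}

/-- A set of functions satisfying (R1)-(R3) is the set of regular functions of the
approach space it generates. -/
theorem stmt3 (S : Set (X → ℝ≥0∞))
    (hR1 : ∀ T ⊆ S, (fun x => ⨆ φ ∈ T, φ x) ∈ S)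
    (hR2 : ∀ φ ∈ S, ∀ ψ ∈ S, (fun x => min (φ x) (ψ x)) ∈ S)
    (hR3 : ∀ φ ∈ S, ∀ r : ℝ≥0∞, (fun x => φ x + r) ∈ S ∧ (fun x => φ x - r) ∈ S)
    (δ : X → Set X → ℝ≥0∞)
    (hδ : ∀ x A, δ x A = ⨆ (φ : X → ℝ≥0∞) (_ : φ ∈ S ∧ ∀ a ∈ A, φ a = 0), φ x) :
    A1 δ ∧ A2 δ ∧ A3 δ ∧ A4 δ ∧ {φ | IsRegularFn δ φ} = S := by
  have hzero : (fun _ : X => (0:ℝ≥0∞)) ∈ S := by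
    have h := hR1 ∅ (by simp)
    simpa using h
  have hconst : ∀ r : ℝ≥0∞, (fun _ : X => r) ∈ S := fun r => by
    simpa using (hR3 _ hzero r).1
  have hle_δ : ∀ φ ∈ S, ∀ (x : X) (A : Set X), (∀ a ∈ A, φ a = 0) → φ x ≤ δ x A := by
    intro φ hφ x A h0
    rw [hδ]
    exact le_iSup_of_le φ (le_iSup_of_le ⟨hφ, h0⟩ le_rfl)
  have hδ_le : ∀ (x : X) (A : Set X) (c : ℝ≥0∞),
      (∀ φ ∈ S, (∀ a ∈ A, φ a = 0) → φ x ≤ c) → δ x A ≤ c := by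
    intro x A c h
    rw [hδ]
    exact iSup_le fun φ => iSup_le fun hφ => h φ hφ.1 hφ.2
  have hδ_self : ∀ (a : X) (A : Set X), a ∈ A → δ a A = 0 := by
    intro a A ha
    exact le_antisymm (hδ_le a A 0 fun φ _ h0 => (h0 a ha).le) zero_le
  have hgS : ∀ A : Set X, (fun x => δ x A) ∈ S := by
    intro A
    have h := hR1 {φ | φ ∈ S ∧ ∀ a ∈ A, φ a = 0} (fun φ hφ => hφ.1)
    have e : (fun x => ⨆ φ ∈ {φ | φ ∈ S ∧ ∀ a ∈ A, φ a = 0}, φ x) = fun x => δ x A := by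
      funext x; rw [hδ]; rfl
    rwa [e] at h
  refine ⟨fun x => hδ_self x {x} rfl, ?_, ?_, ?_, ?_⟩
  · -- A2
    intro x
    exact top_unique (hle_δ _ (hconst ∞) x ∅ (by simp))
  · -- A3
    intro x A B
    refine le_antisymm (le_min (hδ_le _ _ _ fun φ hφ h0 => hle_δ φ hφ x A
        fun a ha => h0 a (Or.inl ha))
      (hδ_le _ _ _ fun φ hφ h0 => hle_δ φ hφ x B fun a ha => h0 a (Or.inr ha))) ?_
    refine le_of_forall_lt fun c hc => ?_
    have hcA : c < δ x A := hc.trans_le (min_le_left _ _)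
    have hcB : c < δ x B := hc.trans_le (min_le_right _ _)
    rw [hδ] at hcA hcB
    obtain ⟨φ, hφ⟩ := lt_iSup_iff.mp hcA
    obtain ⟨hφm, hφx⟩ := lt_iSup_iff.mp hφ
    obtain ⟨ψ, hψ⟩ := lt_iSup_iff.mp hcB
    obtain ⟨hψm, hψx⟩ := lt_iSup_iff.mp hψ
    have hmin := hR2 φ hφm.1 ψ hψm.1
    have h0 : ∀ a ∈ A ∪ B, min (φ a) (ψ a) = 0 := by
      intro a ha
      rcases ha with ha | ha
      · exact le_antisymm ((min_le_left _ _).trans_eq (hφm.2 a ha)) zero_le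
      · exact le_antisymm ((min_le_right _ _).trans_eq (hψm.2 a ha)) zero_le
    exact (lt_min hφx hψx).trans_le (hle_δ _ hmin x (A ∪ B) h0)
  · -- A4
    intro x A B
    set r : ℝ≥0∞ := ⨆ b ∈ B, δ b A with hr
    refine hδ_le x A _ fun φ hφ h0 => ?_
    have hψ := (hR3 φ hφ r).2
    have h0B : ∀ b ∈ B, φ b - r = 0 := by
      intro b hb
      refine tsub_eq_zero_of_le ((hle_δ φ hφ b A h0).trans ?_)
      exact le_iSup_of_le b (le_iSup_of_le hb le_rfl)
    have := hle_δ _ hψ x B h0B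
    exact tsub_le_iff_right.mp this
  · -- regular functions = S
    ext φ
    simp only [Set.mem_setOf_eq]
    constructor
    · -- hard direction
      intro hreg
      have key : ∀ (x : X) (t : ℝ≥0∞), t < φ x →
          ∃ ψ ∈ S, (∀ y, ψ y ≤ φ y) ∧ t < ψ x := by
        intro x t ht
        have htne : t ≠ ∞ := ht.ne_top
        obtain ⟨u, htu, hux⟩ := exists_between ht
        set ε : ℝ≥0∞ := u - t with hεdef
        have hε0 : ε ≠ 0 := by
          rw [hεdef, Ne, tsub_eq_zero_iff_le]
          exact htu.not_ge
        have hεtop : ε ≠ ∞ := by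
          have hu : u ≠ ∞ := hux.ne_top
          exact (tsub_le_self.trans_lt (lt_top_iff_ne_top.mpr hu)).ne
        have htε : t + ε < φ x := by
          rw [hεdef, add_tsub_cancel_of_le htu.le]; exact hux
        -- choose N with t < N * ε
        have hdiv : t / ε ≠ ∞ := by
          simp only [Ne, ENNReal.div_eq_top]
          push_neg
          exact ⟨fun _ => hε0, fun h => absurd h htne⟩
        obtain ⟨N, hN⟩ := ENNReal.exists_nat_gt hdiv
        have htN : t < (N : ℝ≥0∞) * ε := (ENNReal.div_lt_iff (Or.inl hε0) (Or.inl hεtop)).mp hN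
        set n : ℕ := N + 2 with hn
        -- the auxiliary distance functions
        set g : ℕ → X → ℝ≥0∞ := fun k y => δ y {a | φ a ≤ (k : ℝ≥0∞) * ε} with hg
        have hgmem : ∀ k : ℕ, g k ∈ S := fun k => hgS _
        have hgzero : ∀ (k : ℕ) (y : X), φ y ≤ (k : ℝ≥0∞) * ε → g k y = 0 :=
          fun k y h => hδ_self y _ h
        have hglow : ∀ (k : ℕ) (y : X), φ y ≤ g k y + (k : ℝ≥0∞) * ε := by
          intro k y
          have h1 := hreg y {a | φ a ≤ (k : ℝ≥0∞) * ε}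
          have h2 : (⨆ a ∈ {a | φ a ≤ (k : ℝ≥0∞) * ε}, φ a) ≤ (k : ℝ≥0∞) * ε :=
            iSup_le fun a => iSup_le fun ha => ha
          have h3 : φ y - (k : ℝ≥0∞) * ε ≤ g k y := (tsub_le_tsub_left h2 _).trans h1
          exact tsub_le_iff_right.mp h3
        -- the min-telescope
        set F : ℕ → X → ℝ≥0∞ := fun m => Nat.rec (motive := fun _ => X → ℝ≥0∞)
          (fun _ => ((n : ℝ≥0∞) + 1) * ε)
          (fun k Fk y => min (Fk y) (g k y + ((k : ℝ≥0∞) + 1) * ε)) m with hF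
        have hF0 : ∀ y, F 0 y = ((n : ℝ≥0∞) + 1) * ε := fun y => rfl
        have hFs : ∀ (k : ℕ) (y : X),
            F (k + 1) y = min (F k y) (g k y + ((k : ℝ≥0∞) + 1) * ε) := fun k y => rfl
        have hFmem : ∀ m : ℕ, F m ∈ S := by
          intro m
          induction m with
          | zero =>
            have e : F 0 = fun _ : X => ((n : ℝ≥0∞) + 1) * ε := funext hF0
            rw [e]; exact hconst _
          | succ k ih =>
            have e : F (k + 1) = fun y => min (F k y) (g k y + ((k : ℝ≥0∞) + 1) * ε) :=
              funext (hFs k)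
            rw [e]; exact hR2 _ ih _ ((hR3 _ (hgmem k) _).1)
        have hFanti : ∀ (m : ℕ) (y : X), F (m + 1) y ≤ F m y := fun m y => by
          rw [hFs]; exact min_le_left _ _
        have hkε : ∀ k : ℕ, ((k : ℝ≥0∞) + 1) * ε = (k : ℝ≥0∞) * ε + ε := by
          intro k; rw [add_mul, one_mul]
        -- upper bound: F (n+1) ≤ φ + 2ε
        have hFle : ∀ y, F (n + 1) y ≤ φ y + 2 * ε := by
          intro y
          by_cases h : φ y ≤ (n : ℝ≥0∞) * ε
          · have main : ∀ k : ℕ, φ y ≤ (k : ℝ≥0∞) * ε → F (k + 1) y ≤ φ y + 2 * ε := by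
              intro k
              induction k with
              | zero =>
                intro h0
                have h0' : φ y ≤ ((0 : ℕ) : ℝ≥0∞) * ε := h0
                have h1 : F 1 y ≤ g 0 y + (((0 : ℕ) : ℝ≥0∞) + 1) * ε :=
                  min_le_right _ _
                rw [hgzero 0 y h0', zero_add] at h1
                refine h1.trans ?_
                have e : (((0 : ℕ) : ℝ≥0∞) + 1) * ε = ε := by
                  norm_num
                rw [e, two_mul, ← add_assoc]
                exact le_add_self
              | succ k ih =>
                intro h1
                by_cases h2 : φ y ≤ (k : ℝ≥0∞) * ε
                · exact (hFanti (k + 1) y).trans (ih h2)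
                · push_neg at h2
                  have h1' : φ y ≤ ((k + 1 : ℕ) : ℝ≥0∞) * ε := h1
                  have hterm : F (k + 2) y ≤ g (k + 1) y + (((k + 1 : ℕ) : ℝ≥0∞) + 1) * ε := by
                    rw [hFs (k + 1) y]; exact min_le_right _ _
                  rw [hgzero (k + 1) y h1', zero_add] at hterm
                  refine hterm.trans ?_
                  have e : (((k + 1 : ℕ) : ℝ≥0∞) + 1) * ε = (k : ℝ≥0∞) * ε + ε + ε := by
                    push_cast
                    ring
                  have e2 : φ y + 2 * ε = φ y + ε + ε := by ring
                  rw [e, e2]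
                  exact add_le_add_left (add_le_add_left h2.le ε) ε
            exact main n h
          · push_neg at h
            have hcap : ∀ m : ℕ, F m y ≤ ((n : ℝ≥0∞) + 1) * ε := by
              intro m
              induction m with
              | zero => exact (hF0 y).le
              | succ k ih => exact (hFanti k y).trans ih
            refine (hcap (n + 1)).trans ?_
            rw [hkε n]
            calc (n : ℝ≥0∞) * ε + ε ≤ φ y + ε := add_le_add_left h.le ε
              _ ≤ φ y + 2 * ε := by
                  rw [two_mul, ← add_assoc]
                  exact self_le_add_right _ _
        -- lower bound at x
        have hFge : ∀ m : ℕ, min (((n : ℝ≥0∞) + 1) * ε) (φ x + ε) ≤ F m x := by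
          intro m
          induction m with
          | zero => rw [hF0]; exact min_le_left _ _
          | succ k ih =>
            rw [hFs k x]
            refine le_min ih ?_
            have hterm : φ x + ε ≤ g k x + ((k : ℝ≥0∞) + 1) * ε := by
              rw [hkε k, ← add_assoc]
              exact add_le_add_left (hglow k x) ε
            exact (min_le_right _ _).trans hterm
        -- the witness
        refine ⟨fun y => F (n + 1) y - 2 * ε, (hR3 _ (hFmem (n + 1)) (2 * ε)).2, ?_, ?_⟩
        · intro y
          exact tsub_le_iff_right.mpr (hFle y)
        · have h2εtop : 2 * ε ≠ ∞ := ENNReal.mul_ne_top (by norm_num) hεtop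
          have h1 : t + 2 * ε < ((n : ℝ≥0∞) + 1) * ε := by
            have hlt : t + 2 * ε < (N : ℝ≥0∞) * ε + 2 * ε :=
              ENNReal.add_lt_add_right h2εtop htN
            refine hlt.trans_le ?_
            have e : (N : ℝ≥0∞) * ε + 2 * ε = ((N : ℝ≥0∞) + 2) * ε := by ring
            have e2 : ((n : ℝ≥0∞) + 1) = (N : ℝ≥0∞) + 3 := by
              rw [hn]; push_cast; ring
            rw [e, e2]
            gcongr <;> norm_num
          have h2 : t + 2 * ε < φ x + ε := by
            have hlt := ENNReal.add_lt_add_right hεtop htε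
            calc t + 2 * ε = t + ε + ε := by ring
              _ < φ x + ε := hlt
          have h3 : t + 2 * ε < F (n + 1) x := (lt_min h1 h2).trans_le (hFge (n + 1))
          exact (ENNReal.cancel_of_ne h2εtop).lt_tsub_iff_right.mpr h3
      -- assemble: φ is the sup of members of S below it
      have hΦ := hR1 {ψ | ψ ∈ S ∧ ∀ y, ψ y ≤ φ y} fun ψ h => h.1
      have heq : φ = fun x => ⨆ ψ ∈ {ψ | ψ ∈ S ∧ ∀ y, ψ y ≤ φ y}, ψ x := by
        funext x
        refine le_antisymm (le_of_forall_lt fun t ht => ?_)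
          (iSup_le fun ψ => iSup_le fun h => h.2 x)
        obtain ⟨ψ, hψS, hψle, htψ⟩ := key x t ht
        exact htψ.trans_le (le_iSup_of_le ψ (le_iSup_of_le ⟨hψS, hψle⟩ le_rfl))
      rw [heq]
      exact hΦ
    · -- easy direction
      intro hφ x A
      set s : ℝ≥0∞ := ⨆ a ∈ A, φ a with hs
      have hψ := (hR3 φ hφ s).2
      refine hle_δ _ hψ x A fun a ha => ?_
      exact tsub_eq_zero_of_le (le_iSup_of_le a (le_iSup_of_le ha le_rfl))
end

section
/- Let (X,d) be a metric space. Every forward Cauchy net {φ_i}_i in the metric space (𝒫X, d̄) of weights has a Yoneda limit, given pointwise by φ(x) = inf_i sup_{j ≥ i} φ_j(x). -/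
open ENNReal

universe u

variable {X : Type u}

/-- Every forward Cauchy net of weights has a Yoneda limit in (𝒫X, d̄), computed pointwise. -/
theorem stmt5 {ι : Type*} (m : GMetric X) (le : ι → ι → Prop) (φ : ι → X → ℝ≥0∞)
    (hw : ∀ i, IsWeight m (φ i)) (hdir : DirIdx le)
    (hfc : (⨅ i, ⨆ j, ⨆ (_ : le i j), ⨆ k, ⨆ (_ : le j k), dbar (φ j) (φ k)) = 0) :
    IsWeight m (fun x => ⨅ i, ⨆ j, ⨆ (_ : le i j), φ j x) ∧
    ∀ ψ : X → ℝ≥0∞, IsWeight m ψ →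
      dbar (fun x => ⨅ i, ⨆ j, ⨆ (_ : le i j), φ j x) ψ
        = ⨅ i, ⨆ j, ⨆ (_ : le i j), dbar (φ j) ψ := by

  obtain ⟨_, _, _, hdirected⟩ := hdir
  set Φ : X → ℝ≥0∞ := fun x => ⨅ i, ⨆ j, ⨆ (_ : le i j), φ j x with hΦ
  have hΦw : IsWeight m Φ := by
    intro x y
    have hadd : Φ y + m.d x y = ⨅ i, ((⨆ j, ⨆ (_ : le i j), φ j y) + m.d x y) :=
      ENNReal.iInf_add
    rw [hadd]
    refine le_iInf fun i => ?_
    refine le_trans (iInf_le _ i) ?_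
    refine iSup_le fun j => iSup_le fun hj => ?_
    calc φ j x ≤ φ j y + m.d x y := hw j x y
      _ ≤ _ := add_le_add_left (le_iSup₂ (f := fun j (_ : le i j) => φ j y) j hj) _
  refine ⟨hΦw, fun ψ _ => ?_⟩
  set c : ι → ℝ≥0∞ := fun i => ⨆ j, ⨆ (_ : le i j), ⨆ k, ⨆ (_ : le j k), dbar (φ j) (φ k)
    with hc
  have key : ∀ i j, le i j → dbar (φ j) Φ ≤ c i := by
    intro i j hij
    refine iSup_le fun x => ?_
    rw [tsub_le_iff_right]
    calc Φ x ≤ ⨆ k, ⨆ (_ : le j k), φ k x := iInf_le _ j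
      _ ≤ c i + φ j x := by
        refine iSup_le fun k => iSup_le fun hjk => ?_
        calc φ k x ≤ (φ k x - φ j x) + φ j x := le_tsub_add
          _ ≤ dbar (φ j) (φ k) + φ j x :=
            add_le_add_left (le_iSup (fun x => φ k x - φ j x) x) _
          _ ≤ c i + φ j x := by
            refine add_le_add_left ?_ _
            exact le_trans (le_iSup₂ (f := fun k (_ : le j k) => dbar (φ j) (φ k)) k hjk)
              (le_iSup₂ (f := fun j (_ : le i j) => ⨆ k, ⨆ (_ : le j k), dbar (φ j) (φ k)) j hij)
  apply le_antisymm
  · refine le_iInf fun i => ?_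
    refine iSup_le fun x => ?_
    have : ψ x - Φ x = ⨆ i', ψ x - (⨆ j, ⨆ (_ : le i' j), φ j x) := ENNReal.sub_iInf
    rw [this]
    refine iSup_le fun i' => ?_
    obtain ⟨k, hik, hi'k⟩ := hdirected i i'
    calc ψ x - (⨆ j, ⨆ (_ : le i' j), φ j x)
        ≤ ψ x - φ k x :=
          tsub_le_tsub_left (le_iSup₂ (f := fun j (_ : le i' j) => φ j x) k hi'k) _
      _ ≤ dbar (φ k) ψ := le_iSup (fun x => ψ x - φ k x) x
      _ ≤ _ := le_iSup₂ (f := fun j (_ : le i j) => dbar (φ j) ψ) k hik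
  · have tri : ∀ j, dbar (φ j) ψ ≤ dbar (φ j) Φ + dbar Φ ψ := by
      intro j
      refine iSup_le fun x => ?_
      calc ψ x - φ j x ≤ (ψ x - Φ x) + (Φ x - φ j x) := tsub_le_tsub_add_tsub
        _ ≤ dbar Φ ψ + dbar (φ j) Φ :=
          add_le_add (le_iSup (fun x => ψ x - Φ x) x) (le_iSup (fun x => Φ x - φ j x) x)
        _ = dbar (φ j) Φ + dbar Φ ψ := add_comm _ _
    have step : ∀ i, (⨆ j, ⨆ (_ : le i j), dbar (φ j) ψ) ≤ c i + dbar Φ ψ := by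
      intro i
      refine iSup_le fun j => iSup_le fun hij => ?_
      exact le_trans (tri j) (add_le_add_left (key i j hij) _)
    calc (⨅ i, ⨆ j, ⨆ (_ : le i j), dbar (φ j) ψ)
        ≤ ⨅ i, (c i + dbar Φ ψ) := le_iInf fun i => le_trans (iInf_le _ i) (step i)
      _ = (⨅ i, c i) + dbar Φ ψ := ENNReal.iInf_add.symm
      _ = dbar Φ ψ := by rw [hfc, zero_add]
end

section
/- For a weight φ of a metric space (X,d), the following are equivalent: (1) φ is a Scott weight (for every forward Cauchy net {x_i} with Yoneda limit x, inf_i sup_{j≥i} φ(x_j) ≥ φ(x)); (2) for every forward Cauchy net {x_i} with Yoneda limit x, sup_i inf_{j≥i} φ(x_j) ≥ φ(x); (3) φ : (X,d) → ([0,∞], d_R) is Yoneda continuous. -/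
open ENNReal

universe u

variable {X : Type u}

/-- Squeeze lemma: if `a ≤ b + f i` for all `i` and `⨅ i, f i = 0`, then `a ≤ b`. -/
lemma aux_le_of_forall_le_add {ι : Type*} (a b : ℝ≥0∞) (f : ι → ℝ≥0∞)
    (h : ∀ i, a ≤ b + f i) (h0 : (⨅ i, f i) = 0) : a ≤ b := by
  have h1 : a - b ≤ ⨅ i, f i := le_iInf fun i => tsub_le_iff_left.mpr (h i)
  rw [h0] at h1
  exact tsub_eq_zero_iff_le.mp (le_antisymm h1 zero_le)

section auxStmt8

variable {ι : Type*} (m : GMetric X) (le : ι → ι → Prop) (x : ι → X) (a : X)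
  (φ : X → ℝ≥0∞)

/-- liminf ≤ limsup for a directed index. -/
lemma aux_liminf_le_limsup (hd : DirIdx le) :
    (⨆ i, ⨅ j, ⨅ (_ : le i j), φ (x j)) ≤ ⨅ i, ⨆ j, ⨆ (_ : le i j), φ (x j) := by
  refine iSup_le fun i => le_iInf fun i' => ?_
  obtain ⟨k, hik, hi'k⟩ := hd.2.2.2 i i'
  calc (⨅ j, ⨅ (_ : le i j), φ (x j)) ≤ φ (x k) := iInf₂_le k hik
    _ ≤ ⨆ j, ⨆ (_ : le i' j), φ (x j) := le_iSup₂ (f := fun j _ => φ (x j)) k hi'k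

/-- limsup ≤ liminf for a forward Cauchy net and a weight. -/
lemma aux_limsup_le_liminf (hφ : IsWeight m φ) (hc : ForwardCauchy m le x) :
    (⨅ i, ⨆ j, ⨆ (_ : le i j), φ (x j)) ≤ ⨆ i, ⨅ j, ⨅ (_ : le i j), φ (x j) := by
  set L := ⨆ i, ⨅ j, ⨅ (_ : le i j), φ (x j) with hL
  refine aux_le_of_forall_le_add _ _
    (fun i => ⨆ j, ⨆ (_ : le i j), ⨆ k, ⨆ (_ : le j k), m.d (x j) (x k)) ?_ hc.2
  intro i
  set D := ⨆ j, ⨆ (_ : le i j), ⨆ k, ⨆ (_ : le j k), m.d (x j) (x k) with hD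
  refine iInf_le_of_le i (iSup₂_le fun j hij => ?_)
  have h1 : φ (x j) - D ≤ ⨅ k, ⨅ (_ : le j k), φ (x k) := by
    refine le_iInf₂ fun k hjk => tsub_le_iff_right.mpr ?_
    have hd : m.d (x j) (x k) ≤ D := by
      refine le_trans ?_ (le_iSup₂ (f := fun j _ => ⨆ k, ⨆ (_ : le j k), m.d (x j) (x k)) j hij)
      exact le_iSup₂ (f := fun k _ => m.d (x j) (x k)) k hjk
    exact le_trans (hφ (x j) (x k)) (add_le_add_right hd _)
  have h2 : (⨅ k, ⨅ (_ : le j k), φ (x k)) ≤ L :=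
    le_iSup (fun i => ⨅ j, ⨅ (_ : le i j), φ (x j)) j
  calc φ (x j) ≤ φ (x j) - D + D := le_tsub_add
    _ ≤ L + D := add_le_add_left (le_trans h1 h2) D

/-- limsup φ(x_j) ≤ φ a when a is a Yoneda limit. -/
lemma aux_limsup_le (hφ : IsWeight m φ) (hy : YonedaLimit m le x a) :
    (⨅ i, ⨆ j, ⨆ (_ : le i j), φ (x j)) ≤ φ a := by
  have ha : (⨅ i, ⨆ j, ⨆ (_ : le i j), m.d (x j) a) = 0 := by
    rw [← hy a, m.refl]
  refine aux_le_of_forall_le_add _ _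
    (fun i => ⨆ j, ⨆ (_ : le i j), m.d (x j) a) ?_ ha
  intro i
  refine iInf_le_of_le i (iSup₂_le fun j hij => ?_)
  calc φ (x j) ≤ φ a + m.d (x j) a := hφ (x j) a
    _ ≤ φ a + ⨆ j, ⨆ (_ : le i j), m.d (x j) a :=
      add_le_add_right (le_iSup₂ (f := fun j _ => m.d (x j) a) j hij) _

/-- Subtraction commutes with the (nested) supremum. -/
lemma aux_iSup_sub (i : ι) (y : ℝ≥0∞) :
    (⨆ j, ⨆ (_ : le i j), (φ (x j) - y)) = (⨆ j, ⨆ (_ : le i j), φ (x j)) - y := by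
  refine le_antisymm (iSup₂_le fun j hij =>
    tsub_le_tsub_right (le_iSup₂ (f := fun j _ => φ (x j)) j hij) y) ?_
  rw [tsub_le_iff_right]
  refine iSup₂_le fun j hij => ?_
  calc φ (x j) ≤ φ (x j) - y + y := le_tsub_add
    _ ≤ (⨆ j, ⨆ (_ : le i j), (φ (x j) - y)) + y :=
      add_le_add_left (le_iSup₂ (f := fun j _ => φ (x j) - y) j hij) y

/-- Subtraction commutes with the infimum over a nonempty index. -/
lemma aux_iInf_sub [Nonempty ι] (S : ι → ℝ≥0∞) (y : ℝ≥0∞) :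
    (⨅ i, (S i - y)) = (⨅ i, S i) - y := by
  set L := ⨅ i, S i with hLdef
  refine le_antisymm ?_ (le_iInf fun i => tsub_le_tsub_right (iInf_le S i) y)
  rcases eq_or_ne y ∞ with hy | hy
  · subst hy
    inhabit ι
    refine le_trans (iInf_le _ default) ?_
    simp [tsub_eq_zero_iff_le]
  rcases eq_or_ne L ∞ with hL | hL
  · rw [hL]
    simp [hy]
  refine ENNReal.le_of_forall_pos_le_add fun ε hε _ => ?_
  have hlt : L < L + ε := ENNReal.lt_add_right hL (by exact_mod_cast hε.ne')
  obtain ⟨i, hi⟩ := iInf_lt_iff.mp hlt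
  refine le_trans (iInf_le _ i) ?_
  calc S i - y ≤ L + ε - y := tsub_le_tsub_right hi.le y
    _ ≤ L - y + ε := by
        rw [tsub_le_iff_right]
        calc L + (ε : ℝ≥0∞) ≤ (L - y + y) + ε := add_le_add_left (le_tsub_add : L ≤ L - y + y) ε
          _ = L - y + ε + y := by ring

end auxStmt8

/-- Characterizations of Scott weights: liminf condition, limsup condition, and
Yoneda continuity as a map into ([0,∞], d_R). -/
theorem stmt8 (m : GMetric X) (φ : X → ℝ≥0∞) (hφ : IsWeight m φ) :
    ((∀ (ι : Type u) (le : ι → ι → Prop) (x : ι → X) (a : X),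
        ForwardCauchy m le x → YonedaLimit m le x a →
        φ a ≤ ⨅ i, ⨆ j, ⨆ (_ : le i j), φ (x j)) ↔
      (∀ (ι : Type u) (le : ι → ι → Prop) (x : ι → X) (a : X),
        ForwardCauchy m le x → YonedaLimit m le x a →
        φ a ≤ ⨆ i, ⨅ j, ⨅ (_ : le i j), φ (x j))) ∧
    ((∀ (ι : Type u) (le : ι → ι → Prop) (x : ι → X) (a : X),
        ForwardCauchy m le x → YonedaLimit m le x a →
        φ a ≤ ⨅ i, ⨆ j, ⨆ (_ : le i j), φ (x j)) ↔
      (∀ (ι : Type u) (le : ι → ι → Prop) (x : ι → X) (a : X),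
        ForwardCauchy m le x → YonedaLimit m le x a →
        YonedaLimit dR le (fun i => φ (x i)) (φ a))) := by
  constructor
  · constructor
    · intro hA ι le x a hc hy
      exact le_trans (hA ι le x a hc hy) (aux_limsup_le_liminf m le x φ hφ hc)
    · intro hB ι le x a hc hy
      exact le_trans (hB ι le x a hc hy) (aux_liminf_le_limsup le x φ hc.1)
  · constructor
    · intro hA ι le x a hc hy
      have heq : φ a = ⨅ i, ⨆ j, ⨆ (_ : le i j), φ (x j) :=
        le_antisymm (hA ι le x a hc hy) (aux_limsup_le m le x a φ hφ hy)
      intro y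
      have hne : Nonempty ι := hc.1.1
      show φ a - y = ⨅ i, ⨆ j, ⨆ (_ : le i j), (φ (x j) - y)
      calc φ a - y = (⨅ i, ⨆ j, ⨆ (_ : le i j), φ (x j)) - y := by rw [heq]
        _ = ⨅ i, ((⨆ j, ⨆ (_ : le i j), φ (x j)) - y) :=
          (aux_iInf_sub (fun i => ⨆ j, ⨆ (_ : le i j), φ (x j)) y).symm
        _ = ⨅ i, ⨆ j, ⨆ (_ : le i j), (φ (x j) - y) := by
          refine iInf_congr fun i => (aux_iSup_sub le x φ i y).symm
    · intro hC ι le x a hc hy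
      have h0 := hC ι le x a hc hy 0
      simp only [dR] at h0
      simp only [tsub_zero] at h0
      exact le_of_eq h0
end

section
/- Let (X,d) be a metric space. The set of Scott weights satisfies: (1) every representable weight d(−,x) is a Scott weight; (2) arbitrary pointwise suprema of Scott weights are Scott weights; (3) binary pointwise minima of Scott weights are Scott weights; (4) for a Scott weight φ and r ∈ [0,∞], both φ + r and φ ⊖ r are Scott weights. -/
open ENNReal

universe u

variable {X : Type u}

/-- aux: sup over a tail commutes with +r when the tail is nonempty. -/
lemma aux_sup_add {ι : Type*} (p : ι → Prop) (i : ι) (hi : p i)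
    (g : ι → ℝ≥0∞) (r : ℝ≥0∞) :
    (⨆ j, ⨆ (_ : p j), g j) + r ≤ ⨆ j, ⨆ (_ : p j), (g j + r) := by
  haveI : Nonempty {j // p j} := ⟨⟨i, hi⟩⟩
  rw [iSup_subtype' (f := fun j (_ : p j) => g j), iSup_subtype' (f := fun j (_ : p j) => g j + r)]
  exact le_of_eq (ENNReal.iSup_add _)

lemma aux_sup_sub {ι : Type*} (p : ι → Prop) (g : ι → ℝ≥0∞) (r : ℝ≥0∞) :
    (⨆ j, ⨆ (_ : p j), g j) - r ≤ ⨆ j, ⨆ (_ : p j), (g j - r) := by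
  rw [tsub_le_iff_right]
  refine iSup₂_le fun j hj => ?_
  calc g j ≤ (g j - r) + r := le_tsub_add
  _ ≤ (⨆ j, ⨆ (_ : p j), (g j - r)) + r := by
      exact add_le_add_left (le_iSup₂_of_le j hj le_rfl) r

/-- Closure properties of Scott weights. -/
theorem stmt9 (m : GMetric X) :
    (∀ x : X, ScottWeight m (fun z => m.d z x)) ∧
    (∀ (ι : Type*) (f : ι → X → ℝ≥0∞), (∀ i, ScottWeight m (f i)) →
      ScottWeight m (fun x => ⨆ i, f i x)) ∧
    (∀ φ ψ : X → ℝ≥0∞, ScottWeight m φ → ScottWeight m ψ →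
      ScottWeight m (fun x => min (φ x) (ψ x))) ∧
    (∀ (φ : X → ℝ≥0∞) (r : ℝ≥0∞), ScottWeight m φ →
      ScottWeight m (fun x => φ x + r) ∧ ScottWeight m (fun x => φ x - r)) := by
  refine ⟨?_, ?_, ?_, ?_⟩
  · -- representables
    intro x₀
    refine ⟨fun x y => ?_, fun ι le xs a hC hY => (hY x₀).le⟩
    calc m.d x x₀ ≤ m.d x y + m.d y x₀ := m.triangle x y x₀
    _ = m.d y x₀ + m.d x y := add_comm _ _
  · -- suprema
    intro ι f h
    constructor
    · intro x y
      exact iSup_le fun i => ((h i).1 x y).trans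
        (add_le_add_left (le_iSup (fun i => f i y) i) _)
    · intro ι' le x a hC hY
      refine iSup_le fun i => le_iInf fun k => ?_
      refine (((h i).2 ι' le x a hC hY).trans (iInf_le _ k)).trans ?_
      exact iSup_mono fun j => iSup_mono fun _ => le_iSup (fun i' => f i' (x j)) i
  · -- binary minima
    intro φ ψ hφ hψ
    constructor
    · intro x y
      rw [← min_add_add_right]
      exact le_min ((min_le_left _ _).trans (hφ.1 x y))
        ((min_le_right _ _).trans (hψ.1 x y))
    · intro ι le x a hC hY
      refine le_iInf fun i => ?_
      by_contra hcon
      push_neg at hcon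
      obtain ⟨c, hTc, hcm⟩ := exists_between hcon
      refine absurd (ENNReal.le_of_forall_pos_le_add fun ε hε _ => ?_) hTc.not_ge
      obtain ⟨⟨i'⟩, hrefl, htrans, hdir⟩ := hC.1
      have hcpos : (0:ℝ≥0∞) < ε := ENNReal.coe_pos.2 hε
      have h0 : (⨅ i, ⨆ j, ⨆ (_ : le i j), ⨆ k, ⨆ (_ : le j k), m.d (x j) (x k)) < ε := by
        rw [hC.2]; exact hcpos
      obtain ⟨i₀, hi₀⟩ := iInf_lt_iff.1 h0
      obtain ⟨i₁, hi₁, hi₁'⟩ := hdir i i₀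
      have hφa : c < ⨆ j, ⨆ (_ : le i₁ j), φ (x j) :=
        (hcm.trans_le (min_le_left _ _)).trans_le
          ((hφ.2 ι le x a hC hY).trans (iInf_le _ i₁))
      have hψa : c < ⨆ j, ⨆ (_ : le i₁ j), ψ (x j) :=
        (hcm.trans_le (min_le_right _ _)).trans_le
          ((hψ.2 ι le x a hC hY).trans (iInf_le _ i₁))
      simp only [lt_iSup_iff] at hφa hψa
      obtain ⟨j₁, hj₁, hcj₁⟩ := hφa
      obtain ⟨j₂, hj₂, hcj₂⟩ := hψa
      obtain ⟨k, hk1, hk2⟩ := hdir j₁ j₂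
      have hd1 : m.d (x j₁) (x k) < ε := by
        refine lt_of_le_of_lt ?_ hi₀
        exact le_iSup₂_of_le j₁ (htrans hi₁' hj₁) (le_iSup₂_of_le k hk1 le_rfl)
      have hd2 : m.d (x j₂) (x k) < ε := by
        refine lt_of_le_of_lt ?_ hi₀
        exact le_iSup₂_of_le j₂ (htrans hi₁' hj₂) (le_iSup₂_of_le k hk2 le_rfl)
      have e1 : c ≤ φ (x k) + ε :=
        hcj₁.le.trans ((hφ.1 (x j₁) (x k)).trans (add_le_add_right hd1.le _))
      have e2 : c ≤ ψ (x k) + ε :=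
        hcj₂.le.trans ((hψ.1 (x j₂) (x k)).trans (add_le_add_right hd2.le _))
      calc c ≤ min (φ (x k) + ε) (ψ (x k) + ε) := le_min e1 e2
      _ = min (φ (x k)) (ψ (x k)) + ε := min_add_add_right (φ (x k)) (ψ (x k)) (ε : ℝ≥0∞)
      _ ≤ (⨆ j, ⨆ (_ : le i j), min (φ (x j)) (ψ (x j))) + ε := by
          refine add_le_add_left ?_ (ε : ℝ≥0∞)
          exact le_iSup₂_of_le k (htrans hi₁ (htrans hj₁ hk1)) le_rfl
  · -- add and subtract constants
    intro φ r hφ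
    constructor
    · constructor
      · intro x y
        calc φ x + r ≤ (φ y + m.d x y) + r := add_le_add_left (hφ.1 x y) r
        _ = (φ y + r) + m.d x y := by ring
      · intro ι le x a hC hY
        have hrefl := hC.1.2.1
        refine le_iInf fun i => ?_
        calc φ a + r ≤ (⨆ j, ⨆ (_ : le i j), φ (x j)) + r :=
              add_le_add_left ((hφ.2 ι le x a hC hY).trans (iInf_le _ i)) r
        _ ≤ _ := aux_sup_add _ i (hrefl i) _ r
    · constructor
      · intro x y
        rw [tsub_le_iff_right]
        calc φ x ≤ φ y + m.d x y := hφ.1 x y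
        _ ≤ ((φ y - r) + r) + m.d x y := add_le_add_left le_tsub_add _
        _ = (φ y - r) + m.d x y + r := by ring
      · intro ι le x a hC hY
        refine le_iInf fun i => ?_
        calc φ a - r ≤ (⨆ j, ⨆ (_ : le i j), φ (x j)) - r :=
              tsub_le_tsub_right ((hφ.2 ι le x a hC hY).trans (iInf_le _ i)) r
        _ ≤ _ := aux_sup_sub _ _ r
end

section
/- For each metric space (X,d), the Scott approach distance σ satisfies σ(x,{y}) = d(x,y) for all x,y ∈ X; that is, the specialization metric of the Scott approach space of (X,d) recovers d. -/
open ENNReal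

universe u

variable {X : Type u}

/-- The specialization metric of the Scott approach distance recovers d. -/
theorem stmt10 (m : GMetric X) (x y : X) : scottDist m x {y} = m.d x y := by
  apply le_antisymm
  · apply iSup_le; intro φ; apply iSup_le
    rintro ⟨⟨hw, _⟩, hz⟩
    have h := hw x y
    simpa [hz y rfl] using h
  · have hmem : ScottWeight m (fun z => m.d z y) ∧ ∀ a ∈ ({y} : Set X), m.d a y = 0 := by
      refine ⟨⟨fun a b => ?_, fun ι le xs a _ hy => le_of_eq (hy y)⟩, ?_⟩
      · calc m.d a y ≤ m.d a b + m.d b y := m.triangle a b y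
          _ = m.d b y + m.d a b := add_comm _ _
      · rintro a rfl; exact m.refl _
    exact le_iSup₂ (f := fun φ (_ : ScottWeight m φ ∧ ∀ a ∈ ({y} : Set X), φ a = 0) => φ x)
      (fun z => m.d z y) hmem
end

section
/- A map f : (X,d_X) → (Y,d_Y) between metric spaces is Yoneda continuous if and only if f is a contraction with respect to the Scott approach distances, i.e., σ_X(x,A) ≥ σ_Y(f(x), f(A)) for all x ∈ X and A ⊆ X. -/
open ENNReal

universe u

variable {X : Type u}

lemma scottWeight_sub (m : GMetric X) (y : X) (c : ℝ≥0∞) :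
    ScottWeight m (fun z => m.d z y - c) := by
  constructor
  · intro a b
    rw [tsub_le_iff_right]
    calc m.d a y ≤ m.d a b + m.d b y := m.triangle a b y
      _ ≤ m.d a b + ((m.d b y - c) + c) := by gcongr; exact le_tsub_add
      _ = m.d b y - c + m.d a b + c := by ring
  · intro ι le x a _ hY
    simp only [hY y]
    refine le_iInf fun i => ?_
    refine le_trans (tsub_le_tsub_right (iInf_le _ i) c) ?_
    rw [tsub_le_iff_right]
    refine iSup_le fun j => iSup_le fun hj => ?_
    refine le_trans (le_tsub_add : m.d (x j) y ≤ m.d (x j) y - c + c) ?_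
    gcongr
    exact le_iSup_of_le j (le_iSup_of_le hj le_rfl)

/-- A map between metric spaces is Yoneda continuous iff it is a contraction with respect to
the Scott approach distances. -/
theorem stmt11 {Y : Type u} (mX : GMetric X) (mY : GMetric Y) (f : X → Y) :
    ((∀ x y : X, mY.d (f x) (f y) ≤ mX.d x y) ∧
      ∀ (ι : Type u) (le : ι → ι → Prop) (x : ι → X) (a : X),
        ForwardCauchy mX le x → YonedaLimit mX le x a →
        YonedaLimit mY le (fun i => f (x i)) (f a)) ↔
    (∀ (x : X) (A : Set X), scottDist mY (f x) (f '' A) ≤ scottDist mX x A) := by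
  constructor
  · rintro ⟨hne, hyc⟩ x A
    refine iSup_le fun φ => iSup_le fun ⟨⟨hw, hs⟩, hv⟩ => ?_
    have hP : ScottWeight mX (fun z => φ (f z)) ∧ ∀ a ∈ A, φ (f a) = 0 := by
      refine ⟨⟨fun a b => le_trans (hw (f a) (f b)) (by gcongr; exact hne a b), ?_⟩,
        fun a ha => hv (f a) ⟨a, ha, rfl⟩⟩
      intro ι le x' a hfc hyl
      have hfc' : ForwardCauchy mY le (fun i => f (x' i)) := by
        refine ⟨hfc.1, le_antisymm (le_trans ?_ hfc.2.le) zero_le⟩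
        gcongr with i j hj k hk
        exact hne _ _
      exact hs ι le (fun i => f (x' i)) (f a) hfc' (hyc ι le x' a hfc hyl)
    exact le_iSup₂_of_le (fun z => φ (f z)) hP le_rfl
  · intro h
    have hsd_single : ∀ x y : X, scottDist mX x {y} ≤ mX.d x y := by
      intro x y
      refine iSup_le fun φ => iSup_le fun ⟨⟨hw, _⟩, hv⟩ => ?_
      calc φ x ≤ φ y + mX.d x y := hw x y
        _ = mX.d x y := by rw [hv y rfl, zero_add]
    have hne : ∀ x y : X, mY.d (f x) (f y) ≤ mX.d x y := by
      intro x y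
      have h1 : mY.d (f x) (f y) ≤ scottDist mY (f x) (f '' {y}) := by
        have hsw : ScottWeight mY (fun z => mY.d z (f y)) := by
          simpa using scottWeight_sub mY (f y) 0
        refine le_iSup₂_of_le (fun z => mY.d z (f y)) ⟨hsw, ?_⟩ le_rfl
        rintro b ⟨a, rfl, rfl⟩
        exact mY.refl _
      exact le_trans h1 (le_trans (h x {y}) (hsd_single x y))
    refine ⟨hne, ?_⟩
    intro ι le x a hfc hyl y
    have hNE : Nonempty ι := hfc.1.1
    have hrefl := hfc.1.2.1
    have htrans := hfc.1.2.2.1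
    refine le_antisymm ?_ ?_
    · -- mY.d (f a) y ≤ ⨅ i, ⨆ j, ⨆ _, mY.d (f (x j)) y
      refine le_iInf fun i => ?_
      set c : ℝ≥0∞ := ⨆ j, ⨆ (_ : le i j), mY.d (f (x j)) y with hc
      set T : Set X := x '' {j | le i j} with hT
      have hTzero : scottDist mX a T = 0 := by
        refine le_antisymm ?_ zero_le
        refine iSup_le fun φ => iSup_le fun ⟨⟨hw, hs⟩, hv⟩ => ?_
        refine le_trans (hs ι le x a hfc hyl) ?_
        refine le_trans (iInf_le _ i) ?_
        refine iSup_le fun j => iSup_le fun hj => ?_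
        exact (hv (x j) ⟨j, hj, rfl⟩).le
      have hφ : mY.d (f a) y - c ≤ scottDist mY (f a) (f '' T) := by
        refine le_iSup₂_of_le (fun z => mY.d z y - c) ⟨scottWeight_sub mY y c, ?_⟩ le_rfl
        rintro b ⟨z, ⟨j, hj, rfl⟩, rfl⟩
        refine tsub_eq_zero_of_le ?_
        exact le_iSup_of_le j (le_iSup_of_le hj le_rfl)
      have h0 : mY.d (f a) y - c = 0 :=
        le_antisymm (le_trans hφ (le_trans (h a T) hTzero.le)) zero_le
      exact tsub_eq_zero_iff_le.mp h0
    · -- ⨅ ... ≤ mY.d (f a) y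
      have h0 : (⨅ i, ⨆ j, ⨆ (_ : le i j), mX.d (x j) a) = 0 := by
        have := hyl a; rw [mX.refl] at this; exact this.symm
      set c := mY.d (f a) y with hcdef
      have step1 : (⨅ i, ⨆ j, ⨆ (_ : le i j), mY.d (f (x j)) y)
          ≤ ⨅ i, ((⨆ j, ⨆ (_ : le i j), mX.d (x j) a) + c) := by
        refine le_iInf fun i => le_trans (iInf_le _ i) ?_
        refine iSup_le fun j => iSup_le fun hj => ?_
        calc mY.d (f (x j)) y ≤ mY.d (f (x j)) (f a) + mY.d (f a) y := mY.triangle _ _ _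
          _ ≤ mX.d (x j) a + c := by gcongr; exact hne _ _
          _ ≤ (⨆ j, ⨆ (_ : le i j), mX.d (x j) a) + c := by
              gcongr; exact le_iSup_of_le j (le_iSup_of_le hj le_rfl)
      refine le_trans step1 ?_
      have step2 : (⨅ i, ((⨆ j, ⨆ (_ : le i j), mX.d (x j) a) + c))
          ≤ (⨅ i, ⨆ j, ⨆ (_ : le i j), mX.d (x j) a) + c := by
        rw [← tsub_le_iff_right]
        refine le_iInf fun i => ?_
        rw [tsub_le_iff_right]
        exact iInf_le _ i
      rw [h0, zero_add] at step2
      exact step2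
end

section
/- For a weight φ of a metric space (X,d), the following are equivalent: (1) φ is flat; (2) inf_x φ(x) = 0 and the set B⁺φ = {(x,r) ∈ X × [0,∞) | φ(x) < r}, preordered by (x,r) ⊑ (y,s) iff r ≥ s + d(x,y), is directed; (3) there is a forward Cauchy net {x_i} in (X,d) with φ = inf_i sup_{j≥i} d(−, x_j). -/
open ENNReal

universe u

variable {X : Type u}

section FlatAux

lemma key_max (u v : ℝ≥0∞) : u + (v - u) = max u v := by
  rcases le_total u v with h | h
  · rw [add_tsub_cancel_of_le h, max_eq_right h]
  · rw [tsub_eq_zero_of_le h, add_zero, max_eq_left h]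

lemma flat_to_dir (m : GMetric X) (φ : X → ℝ≥0∞) (hflat : FlatWeight m φ) :
    ∀ p q : X × ℝ≥0∞, (φ p.1 < p.2 ∧ p.2 < ∞) → (φ q.1 < q.2 ∧ q.2 < ∞) →
      ∃ z : X × ℝ≥0∞, (φ z.1 < z.2 ∧ z.2 < ∞) ∧ ballLE m p z ∧ ballLE m q z := by
  obtain ⟨hw, hinf, hdist⟩ := hflat
  rintro ⟨a, r⟩ ⟨b, s⟩ ⟨ha, hr⟩ ⟨hb, hs⟩
  simp only at ha hr hb hs
  have hfa : φ a ≠ ∞ := (ha.trans hr).ne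
  have hfb : φ b ≠ ∞ := (hb.trans hs).ne
  set A := φ b - φ a with hA
  set B := φ a - φ b with hB
  have hAfin : A ≠ ∞ := (lt_of_le_of_lt tsub_le_self hfb.lt_top).ne
  have hBfin : B ≠ ∞ := (lt_of_le_of_lt tsub_le_self hfa.lt_top).ne
  have cw1 : IsCoweight m (fun z => m.d a z + A) := by
    intro u v
    calc m.d a v + A ≤ (m.d a u + m.d u v) + A := add_le_add_left (m.triangle a u v) A
    _ = (m.d a u + A) + m.d u v := by ring
  have cw2 : IsCoweight m (fun z => m.d b z + B) := by
    intro u v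
    calc m.d b v + B ≤ (m.d b u + m.d u v) + B := add_le_add_left (m.triangle b u v) B
    _ = (m.d b u + B) + m.d u v := by ring
  have t1 : tensor φ (fun z => m.d a z + A) = φ a + A := by
    apply le_antisymm
    · refine (iInf_le _ a).trans ?_
      simp [m.refl a]
    · refine le_iInf fun z => ?_
      calc φ a + A ≤ (φ z + m.d a z) + A := add_le_add_left (hw a z) A
      _ = φ z + (m.d a z + A) := by ring
  have t2 : tensor φ (fun z => m.d b z + B) = φ b + B := by
    apply le_antisymm
    · refine (iInf_le _ b).trans ?_
      simp [m.refl b]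
    · refine le_iInf fun z => ?_
      calc φ b + B ≤ (φ z + m.d b z) + B := add_le_add_left (hw b z) B
      _ = φ z + (m.d b z + B) := by ring
  set M := max (φ a) (φ b) with hMdef
  have hMa : φ a + A = M := key_max _ _
  have hMb : φ b + B = M := by rw [hB, key_max, max_comm]
  have hM : tensor φ (fun z => max (m.d a z + A) (m.d b z + B)) = M := by
    rw [hdist _ _ cw1 cw2, t1, t2, hMa, hMb, max_self]
  have hMfin : M ≠ ∞ := by
    rw [hMdef]; exact (max_lt hfa.lt_top hfb.lt_top).ne
  set ε := min (r - φ a) (s - φ b) with hε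
  have hε0 : 0 < ε := lt_min (tsub_pos_iff_lt.mpr ha) (tsub_pos_iff_lt.mpr hb)
  have hMε : M < M + ε := ENNReal.lt_add_right hMfin hε0.ne'
  obtain ⟨z, hz⟩ : ∃ z, φ z + max (m.d a z + A) (m.d b z + B) < M + ε := by
    have h' : tensor φ (fun z => max (m.d a z + A) (m.d b z + B)) < M + ε := by
      rw [hM]; exact hMε
    unfold tensor at h'
    have h'' := iInf_lt_iff.mp h'
    simpa using h''
  have hz1 : φ z + m.d a z < φ a + ε := by
    have h1 : (φ z + m.d a z) + A < ((φ a + ε) + A) := by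
      calc (φ z + m.d a z) + A = φ z + (m.d a z + A) := by ring
      _ ≤ φ z + max (m.d a z + A) (m.d b z + B) := add_le_add_right (le_max_left _ _) _
      _ < M + ε := hz
      _ = (φ a + ε) + A := by rw [← hMa]; ring
    exact (ENNReal.add_lt_add_iff_right hAfin).mp h1
  have hz2 : φ z + m.d b z < φ b + ε := by
    have h1 : (φ z + m.d b z) + B < ((φ b + ε) + B) := by
      calc (φ z + m.d b z) + B = φ z + (m.d b z + B) := by ring
      _ ≤ φ z + max (m.d a z + A) (m.d b z + B) := add_le_add_right (le_max_right _ _) _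
      _ < M + ε := hz
      _ = (φ b + ε) + B := by rw [← hMb]; ring
    exact (ENNReal.add_lt_add_iff_right hBfin).mp h1
  have hzr : φ z + m.d a z < r := by
    calc φ z + m.d a z < φ a + ε := hz1
    _ ≤ φ a + (r - φ a) := add_le_add_right (min_le_left _ _) _
    _ = max (φ a) r := key_max _ _
    _ = r := max_eq_right ha.le
  have hzs : φ z + m.d b z < s := by
    calc φ z + m.d b z < φ b + ε := hz2
    _ ≤ φ b + (s - φ b) := add_le_add_right (min_le_right _ _) _
    _ = max (φ b) s := key_max _ _
    _ = s := max_eq_right hb.le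
  have haz : m.d a z ≠ ∞ := ((le_add_self.trans_lt hzr).trans hr.lt_top).ne
  have hbz : m.d b z ≠ ∞ := ((le_add_self.trans_lt hzs).trans hs.lt_top).ne
  have hazr : m.d a z ≤ r := (le_add_self.trans_lt hzr).le
  have hbzs : m.d b z ≤ s := (le_add_self.trans_lt hzs).le
  refine ⟨(z, min (r - m.d a z) (s - m.d b z)), ⟨?_, ?_⟩, ?_, ?_⟩
  · exact lt_min ((ENNReal.cancel_of_ne haz).lt_tsub_iff_right.mpr hzr)
      ((ENNReal.cancel_of_ne hbz).lt_tsub_iff_right.mpr hzs)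
  · exact ((min_le_left _ _).trans_lt (tsub_le_self.trans_lt hr))
  · show min (r - m.d a z) (s - m.d b z) + m.d a z ≤ r
    calc min (r - m.d a z) (s - m.d b z) + m.d a z ≤ (r - m.d a z) + m.d a z :=
      add_le_add_left (min_le_left _ _) _
    _ = r := tsub_add_cancel_of_le hazr
  · show min (r - m.d a z) (s - m.d b z) + m.d b z ≤ s
    calc min (r - m.d a z) (s - m.d b z) + m.d b z ≤ (s - m.d b z) + m.d b z :=
      add_le_add_left (min_le_right _ _) _
    _ = s := tsub_add_cancel_of_le hbzs

end FlatAux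

section NetAux

/-- Formal balls strictly containing φ, with finite radius. -/
def FB (m : GMetric X) (φ : X → ℝ≥0∞) : Type u := {p : X × ℝ≥0∞ // φ p.1 < p.2 ∧ p.2 < ∞}

def fbLE (m : GMetric X) (φ : X → ℝ≥0∞) (p q : FB m φ) : Prop := ballLE m p.val q.val

def fbPt (m : GMetric X) (φ : X → ℝ≥0∞) (p : FB m φ) : X := p.val.1

lemma dir_to_net (m : GMetric X) (φ : X → ℝ≥0∞) (hφ : IsWeight m φ)
    (hinf : (⨅ x, φ x) = 0)
    (hdir : ∀ p q : X × ℝ≥0∞, (φ p.1 < p.2 ∧ p.2 < ∞) → (φ q.1 < q.2 ∧ q.2 < ∞) →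
      ∃ z : X × ℝ≥0∞, (φ z.1 < z.2 ∧ z.2 < ∞) ∧ ballLE m p z ∧ ballLE m q z) :
    ∃ (ι : Type u) (le : ι → ι → Prop) (x : ι → X),
      ForwardCauchy m le x ∧ φ = fun y => ⨅ i, ⨆ j, ⨆ (_ : le i j), m.d y (x j) := by
  classical
  have hex : ∀ ε : ℝ≥0∞, 0 < ε → ∃ a : X, φ a < ε := by
    intro ε hε
    exact iInf_lt_iff.mp (by rw [hinf]; exact hε)
  have hdir' : ∀ p q : FB m φ, ∃ z : FB m φ, fbLE m φ p z ∧ fbLE m φ q z := by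
    intro p q
    obtain ⟨z, hz, h1, h2⟩ := hdir p.val q.val p.2 q.2
    exact ⟨⟨z, hz⟩, h1, h2⟩
  refine ⟨FB m φ, fbLE m φ, fbPt m φ, ⟨⟨?_, ?_, ?_, hdir'⟩, ?_⟩, ?_⟩
  · -- Nonempty
    obtain ⟨a, ha⟩ := hex 1 one_pos
    exact ⟨⟨(a, 1), ha, one_lt_top⟩⟩
  · -- Reflexive
    intro p
    show p.val.2 + m.d p.val.1 p.val.1 ≤ p.val.2
    rw [m.refl, add_zero]
  · -- Transitive
    intro p q r hpq hqr
    show r.val.2 + m.d p.val.1 r.val.1 ≤ p.val.2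
    calc r.val.2 + m.d p.val.1 r.val.1
        ≤ r.val.2 + (m.d p.val.1 q.val.1 + m.d q.val.1 r.val.1) :=
          add_le_add_right (m.triangle _ _ _) _
      _ = (r.val.2 + m.d q.val.1 r.val.1) + m.d p.val.1 q.val.1 := by ring
      _ ≤ q.val.2 + m.d p.val.1 q.val.1 := add_le_add_left hqr _
      _ ≤ p.val.2 := hpq
  · -- forward Cauchy sum = 0
    refine le_antisymm ?_ zero_le
    refine ENNReal.le_of_forall_pos_le_add fun ε hε _ => ?_
    have hε' : (0:ℝ≥0∞) < (ε:ℝ≥0∞) := by exact_mod_cast hε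
    obtain ⟨a, ha⟩ := hex ε hε'
    refine (iInf_le _ (⟨(a, ε), ha, coe_lt_top⟩ : FB m φ)).trans ?_
    rw [zero_add]
    refine iSup_le fun j => iSup_le fun hij => iSup_le fun k => iSup_le fun hjk => ?_
    calc m.d (fbPt m φ j) (fbPt m φ k) ≤ k.val.2 + m.d j.val.1 k.val.1 := le_add_self
      _ ≤ j.val.2 := hjk
      _ ≤ j.val.2 + m.d a j.val.1 := le_self_add
      _ ≤ (ε:ℝ≥0∞) := hij
  · -- representation
    funext y
    apply le_antisymm
    · -- φ y ≤ ⨅ ...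
      refine le_iInf fun p => ?_
      refine ENNReal.le_of_forall_pos_le_add fun ε hε _ => ?_
      have hε' : (0:ℝ≥0∞) < (ε:ℝ≥0∞) := by exact_mod_cast hε
      obtain ⟨a, ha⟩ := hex ε hε'
      obtain ⟨w, hz1, hz2⟩ := hdir' p ⟨(a, ε), ha, coe_lt_top⟩
      have hwε : w.val.2 ≤ (ε:ℝ≥0∞) := le_self_add.trans hz2
      have hd : m.d y (fbPt m φ w) ≤ ⨆ j, ⨆ (_ : fbLE m φ p j), m.d y (fbPt m φ j) :=
        le_iSup₂ (f := fun (j : FB m φ) (_ : fbLE m φ p j) => m.d y (fbPt m φ j)) w hz1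
      calc φ y ≤ φ (fbPt m φ w) + m.d y (fbPt m φ w) := hφ y _
        _ ≤ (ε:ℝ≥0∞) + m.d y (fbPt m φ w) := add_le_add_left (w.2.1.le.trans hwε) _
        _ ≤ (ε:ℝ≥0∞) + ⨆ j, ⨆ (_ : fbLE m φ p j), m.d y (fbPt m φ j) := add_le_add_right hd _
        _ = (⨆ j, ⨆ (_ : fbLE m φ p j), m.d y (fbPt m φ j)) + (ε:ℝ≥0∞) := add_comm _ _
    · -- ⨅ ... ≤ φ y
      refine ENNReal.le_of_forall_pos_le_add fun ε hε hfin => ?_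
      have hε' : (0:ℝ≥0∞) < (ε:ℝ≥0∞) := by exact_mod_cast hε
      have hlt : φ y < φ y + (ε:ℝ≥0∞) := ENNReal.lt_add_right hfin.ne hε'.ne'
      refine (iInf_le _ (⟨(y, φ y + ε), hlt, ENNReal.add_lt_top.mpr ⟨hfin, coe_lt_top⟩⟩ :
        FB m φ)).trans ?_
      refine iSup_le fun j => iSup_le fun hj => ?_
      calc m.d y (fbPt m φ j) ≤ j.val.2 + m.d y j.val.1 := le_add_self
        _ ≤ φ y + (ε:ℝ≥0∞) := hj

end NetAux

section FlatFromNet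

lemma iInf_max_of_directed {ι : Type*} {le : ι → ι → Prop}
    (hdir : ∀ i j, ∃ k, le i k ∧ le j k) (S₁ S₂ : ι → ℝ≥0∞)
    (h1 : ∀ i j, le i j → S₁ j ≤ S₁ i) (h2 : ∀ i j, le i j → S₂ j ≤ S₂ i) :
    ⨅ i, max (S₁ i) (S₂ i) = max (⨅ i, S₁ i) (⨅ i, S₂ i) := by
  apply le_antisymm
  · refine ENNReal.le_of_forall_pos_le_add fun ε hε hfin => ?_
    have hε' : (0:ℝ≥0∞) < (ε:ℝ≥0∞) := by exact_mod_cast hε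
    have hfin1 : (⨅ i, S₁ i) ≠ ∞ := ((le_max_left _ _).trans_lt hfin).ne
    have hfin2 : (⨅ i, S₂ i) ≠ ∞ := ((le_max_right _ _).trans_lt hfin).ne
    obtain ⟨i₁, hi₁⟩ := iInf_lt_iff.mp (ENNReal.lt_add_right hfin1 hε'.ne')
    obtain ⟨i₂, hi₂⟩ := iInf_lt_iff.mp (ENNReal.lt_add_right hfin2 hε'.ne')
    obtain ⟨k, hk1, hk2⟩ := hdir i₁ i₂
    refine (iInf_le _ k).trans ?_
    calc max (S₁ k) (S₂ k) ≤ max ((⨅ i, S₁ i) + ε) ((⨅ i, S₂ i) + ε) :=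
        max_le_max ((h1 i₁ k hk1).trans hi₁.le) ((h2 i₂ k hk2).trans hi₂.le)
      _ = max (⨅ i, S₁ i) (⨅ i, S₂ i) + ε := max_add_add_right _ _ _
  · exact le_iInf fun i => max_le_max (iInf_le _ i) (iInf_le _ i)

lemma net_to_flat (m : GMetric X) (φ : X → ℝ≥0∞) (hφ : IsWeight m φ)
    {ι : Type u} {le : ι → ι → Prop} {x : ι → X}
    (hc : ForwardCauchy m le x)
    (hrep : φ = fun y => ⨅ i, ⨆ j, ⨆ (_ : le i j), m.d y (x j)) :
    FlatWeight m φ := by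
  obtain ⟨⟨⟨i₀⟩, hrefl, htrans, hd⟩, hcauchy⟩ := hc
  -- small tails
  have hsmall : ∀ ε : ℝ≥0∞, 0 < ε → ∀ i, ∃ j, le i j ∧ φ (x j) < ε := by
    intro ε hε i
    obtain ⟨i', hi'⟩ := iInf_lt_iff.mp (by rw [hcauchy]; exact hε)
    obtain ⟨j, hj1, hj2⟩ := hd i i'
    refine ⟨j, hj1, ?_⟩
    have h1 : φ (x j) ≤ ⨆ k, ⨆ (_ : le j k), m.d (x j) (x k) := by
      rw [hrep]; exact iInf_le _ j
    refine (h1.trans ?_).trans_lt hi'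
    refine iSup_le fun k => iSup_le fun hk => ?_
    calc m.d (x j) (x k) ≤ ⨆ k', ⨆ (_ : le j k'), m.d (x j) (x k') :=
        le_iSup₂ (f := fun k' (_ : le j k') => m.d (x j) (x k')) k hk
      _ ≤ ⨆ j', ⨆ (_ : le i' j'), ⨆ k', ⨆ (_ : le j' k'), m.d (x j') (x k') :=
        le_iSup₂ (f := fun j' (_ : le i' j') => ⨆ k', ⨆ (_ : le j' k'), m.d (x j') (x k')) j hj2
  -- inf φ = 0
  have h0 : (⨅ z, φ z) = 0 := by
    refine le_antisymm ?_ zero_le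
    refine ENNReal.le_of_forall_pos_le_add fun ε hε _ => ?_
    have hε' : (0:ℝ≥0∞) < (ε:ℝ≥0∞) := by exact_mod_cast hε
    obtain ⟨j, _, hj2⟩ := hsmall ε hε' i₀
    rw [zero_add]
    exact (iInf_le _ (x j)).trans hj2.le
  -- antitone sups
  have hanti : ∀ (ψ : X → ℝ≥0∞) (i i' : ι), le i i' →
      (⨆ j, ⨆ (_ : le i' j), ψ (x j)) ≤ ⨆ j, ⨆ (_ : le i j), ψ (x j) := by
    intro ψ i i' hii'
    exact iSup_le fun j => iSup_le fun hj =>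
      le_iSup₂ (f := fun j (_ : le i j) => ψ (x j)) j (htrans hii' hj)
  -- tensor = limsup for coweights
  have hL : ∀ ψ : X → ℝ≥0∞, IsCoweight m ψ →
      tensor φ ψ = ⨅ i, ⨆ j, ⨆ (_ : le i j), ψ (x j) := by
    intro ψ hψ
    apply le_antisymm
    · refine ENNReal.le_of_forall_pos_le_add fun ε hε hfin => ?_
      have hε2 : (0:ℝ≥0∞) < (ε:ℝ≥0∞)/2 := ENNReal.half_pos (by exact_mod_cast hε.ne')
      obtain ⟨i, hi⟩ := iInf_lt_iff.mp (ENNReal.lt_add_right hfin.ne hε2.ne')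
      obtain ⟨j, hj1, hj2⟩ := hsmall ((ε:ℝ≥0∞)/2) hε2 i
      calc tensor φ ψ ≤ φ (x j) + ψ (x j) := iInf_le _ (x j)
        _ ≤ (ε:ℝ≥0∞)/2 + ⨆ j', ⨆ (_ : le i j'), ψ (x j') :=
            add_le_add hj2.le (le_iSup₂ (f := fun j' (_ : le i j') => ψ (x j')) j hj1)
        _ ≤ (ε:ℝ≥0∞)/2 + ((⨅ i', ⨆ j', ⨆ (_ : le i' j'), ψ (x j')) + (ε:ℝ≥0∞)/2) :=
            add_le_add_right hi.le _
        _ = (⨅ i', ⨆ j', ⨆ (_ : le i' j'), ψ (x j')) + ((ε:ℝ≥0∞)/2 + (ε:ℝ≥0∞)/2) := by ring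
        _ = (⨅ i', ⨆ j', ⨆ (_ : le i' j'), ψ (x j')) + (ε:ℝ≥0∞) := by
            rw [ENNReal.add_halves]
    · refine le_iInf fun z => ?_
      have step : ∀ i, (⨅ i', ⨆ j, ⨆ (_ : le i' j), ψ (x j)) ≤
          ψ z + ⨆ j, ⨆ (_ : le i j), m.d z (x j) := by
        intro i
        refine (iInf_le _ i).trans ?_
        refine iSup_le fun j => iSup_le fun hj => ?_
        exact (hψ z (x j)).trans (add_le_add_right
          (le_iSup₂ (f := fun j' (_ : le i j') => m.d z (x j')) j hj) _)
      calc (⨅ i', ⨆ j, ⨆ (_ : le i' j), ψ (x j))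
          ≤ ⨅ i, (ψ z + ⨆ j, ⨆ (_ : le i j), m.d z (x j)) := le_iInf step
        _ = ψ z + ⨅ i, ⨆ j, ⨆ (_ : le i j), m.d z (x j) := ENNReal.add_iInf.symm
        _ = ψ z + φ z := by rw [hrep]
        _ = φ z + ψ z := add_comm _ _
  refine ⟨hφ, h0, fun ψ₁ ψ₂ h1 h2 => ?_⟩
  have hm : IsCoweight m (fun z => max (ψ₁ z) (ψ₂ z)) := by
    intro u v
    exact max_le ((h1 u v).trans (add_le_add_left (le_max_left _ _) _))
      ((h2 u v).trans (add_le_add_left (le_max_right _ _) _))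
  have hsup : ∀ i, (⨆ j, ⨆ (_ : le i j), max (ψ₁ (x j)) (ψ₂ (x j))) =
      max (⨆ j, ⨆ (_ : le i j), ψ₁ (x j)) (⨆ j, ⨆ (_ : le i j), ψ₂ (x j)) := by
    intro i
    show (⨆ j, ⨆ (_ : le i j), (ψ₁ (x j) ⊔ ψ₂ (x j))) =
      (⨆ j, ⨆ (_ : le i j), ψ₁ (x j)) ⊔ (⨆ j, ⨆ (_ : le i j), ψ₂ (x j))
    simp_rw [iSup_sup_eq]
  calc tensor φ (fun z => max (ψ₁ z) (ψ₂ z))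
      = ⨅ i, ⨆ j, ⨆ (_ : le i j), max (ψ₁ (x j)) (ψ₂ (x j)) := hL _ hm
    _ = ⨅ i, max (⨆ j, ⨆ (_ : le i j), ψ₁ (x j)) (⨆ j, ⨆ (_ : le i j), ψ₂ (x j)) :=
        iInf_congr hsup
    _ = max (⨅ i, ⨆ j, ⨆ (_ : le i j), ψ₁ (x j)) (⨅ i, ⨆ j, ⨆ (_ : le i j), ψ₂ (x j)) :=
        iInf_max_of_directed hd _ _ (hanti ψ₁) (hanti ψ₂)
    _ = max (tensor φ ψ₁) (tensor φ ψ₂) := by rw [hL _ h1, hL _ h2]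

end FlatFromNet

/-- Characterizations of flat weights: via directedness of B⁺φ and via forward Cauchy nets. -/
theorem stmt12 (m : GMetric X) (φ : X → ℝ≥0∞) (hφ : IsWeight m φ) :
    (FlatWeight m φ ↔
      ((⨅ x, φ x) = 0 ∧
        ∀ p q : X × ℝ≥0∞, (φ p.1 < p.2 ∧ p.2 < ∞) → (φ q.1 < q.2 ∧ q.2 < ∞) →
          ∃ z : X × ℝ≥0∞, (φ z.1 < z.2 ∧ z.2 < ∞) ∧ ballLE m p z ∧ ballLE m q z)) ∧
    (FlatWeight m φ ↔
      ∃ (ι : Type u) (le : ι → ι → Prop) (x : ι → X),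
        ForwardCauchy m le x ∧ φ = fun y => ⨅ i, ⨆ j, ⨆ (_ : le i j), m.d y (x j)) := by
  constructor
  · constructor
    · intro hf
      exact ⟨hf.2.1, flat_to_dir m φ hf⟩
    · rintro ⟨hinf, hdir⟩
      obtain ⟨ι, l, x, hc, hrep⟩ := dir_to_net m φ hφ hinf hdir
      exact net_to_flat m φ hφ hc hrep
  · constructor
    · intro hf
      exact dir_to_net m φ hφ hf.2.1 (flat_to_dir m φ hf)
    · rintro ⟨ι, l, x, hc, hrep⟩
      exact net_to_flat m φ hφ hc hrep
end

section
/- If {x_i} is a forward Cauchy net in a metric space (X,d) and φ = inf_i sup_{j≥i} d(−, x_j), then for every coweight ψ of (X,d), φ ⊗ ψ = inf_i sup_{j≥i} ψ(x_j). -/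
open ENNReal

universe u

variable {X : Type u}

/-- For the weight generated by a forward Cauchy net, φ ⊗ ψ = inf_i sup_{j≥i} ψ(x_j)
for every coweight ψ. -/
theorem stmt13 {ι : Type*} (m : GMetric X) (le : ι → ι → Prop) (x : ι → X)
    (hfc : ForwardCauchy m le x) (ψ : X → ℝ≥0∞) (hψ : IsCoweight m ψ) :
    tensor (fun y => ⨅ i, ⨆ j, ⨆ (_ : le i j), m.d y (x j)) ψ
      = ⨅ i, ⨆ j, ⨆ (_ : le i j), ψ (x j) := by
  obtain ⟨⟨hne, hrefl, htrans, hdir⟩, hcz⟩ := hfc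
  set φ : X → ℝ≥0∞ := fun y => ⨅ i, ⨆ j, ⨆ (_ : le i j), m.d y (x j) with hφdef
  apply le_antisymm
  · -- tensor ≤ L
    apply ENNReal.le_of_forall_pos_le_add
    intro ε hε _
    have h0 : (⨅ i, ⨆ j, ⨆ (_ : le i j), ⨆ k, ⨆ (_ : le j k), m.d (x j) (x k))
        < (ε : ℝ≥0∞) := by
      rw [hcz]; exact ENNReal.coe_pos.mpr hε
    obtain ⟨i1, hi1⟩ := iInf_lt_iff.mp h0
    rw [ENNReal.iInf_add]
    refine le_iInf fun i => ?_
    obtain ⟨k, hik, hi1k⟩ := hdir i i1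
    have h1 : tensor φ ψ ≤ φ (x k) + ψ (x k) := iInf_le _ _
    have h2 : φ (x k) ≤ (ε : ℝ≥0∞) := by
      refine le_trans (iInf_le _ k) (le_trans ?_ hi1.le)
      refine iSup₂_le fun j hj => ?_
      exact le_iSup₂_of_le k hi1k (le_iSup₂_of_le j hj le_rfl)
    have h3 : ψ (x k) ≤ ⨆ j, ⨆ (_ : le i j), ψ (x j) := le_iSup₂_of_le k hik le_rfl
    calc tensor φ ψ ≤ φ (x k) + ψ (x k) := h1
      _ ≤ (ε : ℝ≥0∞) + ψ (x k) := add_le_add_left h2 _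
      _ ≤ (ε : ℝ≥0∞) + ⨆ j, ⨆ (_ : le i j), ψ (x j) := add_le_add_right h3 _
      _ = (⨆ j, ⨆ (_ : le i j), ψ (x j)) + ε := add_comm _ _
  · refine le_iInf fun y => ?_
    show _ ≤ φ y + ψ y
    rw [show φ y + ψ y = ⨅ i, ((⨆ j, ⨆ (_ : le i j), m.d y (x j)) + ψ y) from
      ENNReal.iInf_add]
    refine le_iInf fun i => iInf_le_of_le i ?_
    refine iSup₂_le fun j hj => le_trans (hψ y (x j)) ?_
    rw [add_comm]
    exact add_le_add_left (le_iSup₂_of_le j hj le_rfl) (ψ y)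
end

section
/- For a forward Cauchy net {x_i} in a metric space (X,d), an element x is a Yoneda limit of {x_i} if and only if x is a colimit of the weight φ = inf_i sup_{j≥i} d(−, x_j), i.e., d̄(φ, d(−,y)) = d(x,y) for all y ∈ X. -/
open ENNReal

universe u

variable {X : Type u}

/-- x is a Yoneda limit of a forward Cauchy net iff x is a colimit of the generated weight. -/
theorem stmt14 {ι : Type*} (m : GMetric X) (le : ι → ι → Prop) (x : ι → X)
    (hfc : ForwardCauchy m le x) (a : X) :
    YonedaLimit m le x a ↔
      IsColimit m (fun y => ⨅ i, ⨆ j, ⨆ (_ : le i j), m.d y (x j)) a := by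
  obtain ⟨⟨hne, hrefl, htrans, hdir⟩, hcauchy⟩ := hfc
  set φ : X → ℝ≥0∞ := fun z => ⨅ i, ⨆ j, ⨆ (_ : le i j), m.d z (x j) with hφ
  have key : ∀ y, dbar φ (fun z => m.d z y)
      = ⨅ i, ⨆ j, ⨆ (_ : le i j), m.d (x j) y := by
    intro y
    apply le_antisymm
    · -- dbar ≤ L
      apply iSup_le
      intro z
      rw [tsub_le_iff_right]
      -- d z y ≤ L y + φ z
      have hsum : (⨅ i, ⨆ j, ⨆ (_ : le i j), m.d (x j) y) + φ z
          = ⨅ i, (⨆ j, ⨆ (_ : le i j), m.d (x j) y) + (⨆ j, ⨆ (_ : le i j), m.d z (x j)) := by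
        apply ENNReal.iInf_add_iInf
        intro i j
        obtain ⟨k, hik, hjk⟩ := hdir i j
        refine ⟨k, add_le_add ?_ ?_⟩
        · exact iSup_le fun l => iSup_le fun hkl =>
            le_iSup_of_le l (le_iSup_of_le (htrans hik hkl) le_rfl)
        · exact iSup_le fun l => iSup_le fun hkl =>
            le_iSup_of_le l (le_iSup_of_le (htrans hjk hkl) le_rfl)
      rw [hsum]
      apply le_iInf
      intro i
      obtain ⟨k, hik, _⟩ := hdir i i
      calc m.d z y ≤ m.d z (x k) + m.d (x k) y := m.triangle _ _ _
        _ = m.d (x k) y + m.d z (x k) := add_comm _ _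
        _ ≤ _ := add_le_add
            (le_iSup₂_of_le k hik le_rfl)
            (le_iSup₂_of_le k hik le_rfl)
    · -- L ≤ dbar
      have hCi : ∀ i j, le i j → φ (x j)
          ≤ ⨆ j, ⨆ (_ : le i j), ⨆ k, ⨆ (_ : le j k), m.d (x j) (x k) := by
        intro i j hij
        refine le_trans (iInf_le _ j) ?_
        refine le_iSup_of_le j (le_iSup_of_le hij ?_)
        exact iSup_le fun k => iSup_le fun hjk =>
          le_iSup_of_le k (le_iSup_of_le hjk le_rfl)
      have : (⨅ i, ⨆ j, ⨆ (_ : le i j), m.d (x j) y)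
          ≤ dbar φ (fun z => m.d z y)
            + ⨅ i, ⨆ j, ⨆ (_ : le i j), ⨆ k, ⨆ (_ : le j k), m.d (x j) (x k) := by
        rw [ENNReal.add_iInf]
        apply iInf_mono
        intro i
        apply iSup_le
        intro j
        apply iSup_le
        intro hij
        calc m.d (x j) y ≤ (m.d (x j) y - φ (x j)) + φ (x j) := le_tsub_add
          _ ≤ dbar φ (fun z => m.d z y)
              + ⨆ j, ⨆ (_ : le i j), ⨆ k, ⨆ (_ : le j k), m.d (x j) (x k) :=
            add_le_add (le_iSup_of_le (x j) le_rfl) (hCi i j hij)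
      simpa [hcauchy] using this
  constructor
  · intro h y
    rw [key y, ← h y]
  · intro h y
    rw [← key y, h y]
end

section
/- A weight φ of a metric space (X,d) is a Scott weight if and only if for every flat weight ψ of (X,d) and every colimit x of ψ, d̄(ψ, φ) ≥ φ(x). -/
open ENNReal

universe u

variable {X : Type u}

open NNReal in
private lemma aux15_tailSup_anti {ι' : Type*} {le : ι' → ι' → Prop} (htrans : Transitive le)
    (f : ι' → ℝ≥0∞) {i i' : ι'} (h : le i i') :
    (⨆ j, ⨆ (_ : le i' j), f j) ≤ ⨆ j, ⨆ (_ : le i j), f j :=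
  iSup₂_le fun j hj => le_iSup₂ (f := fun j _ => f j) j (htrans h hj)

private lemma aux15_tailInf_le_limsup {ι' : Type*} {le : ι' → ι' → Prop}
    (hdir : ∀ i j, ∃ k, le i k ∧ le j k) (f : ι' → ℝ≥0∞) (i : ι') :
    (⨅ j, ⨅ (_ : le i j), f j) ≤ ⨅ i', ⨆ j, ⨆ (_ : le i' j), f j :=
  le_iInf fun i' => by
    obtain ⟨k, hik, hi'k⟩ := hdir i i'
    exact (iInf₂_le k hik).trans (le_iSup₂ (f := fun j _ => f j) k hi'k)

open NNReal in
private lemma aux15_limsup_le_of_tail {ι' : Type*} {le : ι' → ι' → Prop} (f : ι' → ℝ≥0∞) {c : ℝ≥0∞}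
    (h : ∀ ε : ℝ≥0, 0 < ε → c < ⊤ → ∃ i, ∀ j, le i j → f j ≤ c + ε) :
    (⨅ i, ⨆ j, ⨆ (_ : le i j), f j) ≤ c := by
  refine ENNReal.le_of_forall_pos_le_add fun ε hε hc => ?_
  obtain ⟨i, hi⟩ := h ε hε hc
  exact iInf_le_of_le i (iSup₂_le hi)

open NNReal in
private lemma aux15_le_limsup_add {ι' : Type*} {le : ι' → ι' → Prop}
    (hdir : ∀ i j, ∃ k, le i k ∧ le j k) (f : ι' → ℝ≥0∞) {g c : ℝ≥0∞}
    (h : ∀ ε : ℝ≥0, 0 < ε → (⨅ i, ⨆ j, ⨆ (_ : le i j), f j) + c < ⊤ →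
        ∃ i, ∀ j, le i j → g ≤ f j + (c + ε)) :
    g ≤ (⨅ i, ⨆ j, ⨆ (_ : le i j), f j) + c := by
  refine ENNReal.le_of_forall_pos_le_add fun ε hε hfin => ?_
  obtain ⟨i, hi⟩ := h ε hε hfin
  have h1 : g - (c + ε) ≤ ⨅ j, ⨅ (_ : le i j), f j :=
    le_iInf₂ fun j hj => tsub_le_iff_right.2 (hi j hj)
  calc g ≤ (⨅ j, ⨅ (_ : le i j), f j) + (c + ε) := tsub_le_iff_right.1 h1
    _ ≤ (⨅ i, ⨆ j, ⨆ (_ : le i j), f j) + (c + ↑ε) :=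
        add_le_add_left (aux15_tailInf_le_limsup hdir f i) _
    _ = (⨅ i, ⨆ j, ⨆ (_ : le i j), f j) + c + ε := (add_assoc _ _ _).symm

private lemma aux15_limsup_max {ι' : Type*} {le : ι' → ι' → Prop} (htrans : Transitive le)
    (hdir : ∀ i j, ∃ k, le i k ∧ le j k) (f g : ι' → ℝ≥0∞) :
    (⨅ i, ⨆ j, ⨆ (_ : le i j), max (f j) (g j)) =
      max (⨅ i, ⨆ j, ⨆ (_ : le i j), f j) (⨅ i, ⨆ j, ⨆ (_ : le i j), g j) := by
  refine le_antisymm ?_ (max_le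
    (le_iInf fun i => (iInf_le _ i).trans (iSup₂_mono fun j _ => le_max_left _ _))
    (le_iInf fun i => (iInf_le _ i).trans (iSup₂_mono fun j _ => le_max_right _ _)))
  refine ENNReal.le_of_forall_pos_le_add fun ε hε hfin => ?_
  set M := max (⨅ i, ⨆ j, ⨆ (_ : le i j), f j) (⨅ i, ⨆ j, ⨆ (_ : le i j), g j) with hM
  have hMlt : M < M + ε := ENNReal.lt_add_right hfin.ne (by exact_mod_cast hε.ne')
  obtain ⟨i1, hi1⟩ := iInf_lt_iff.1 (lt_of_le_of_lt (le_max_left _ _ : _ ≤ M) hMlt)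
  obtain ⟨i2, hi2⟩ := iInf_lt_iff.1 (lt_of_le_of_lt (le_max_right _ _ : _ ≤ M) hMlt)
  obtain ⟨k, hk1, hk2⟩ := hdir i1 i2
  refine iInf_le_of_le k ?_
  calc (⨆ j, ⨆ (_ : le k j), max (f j) (g j))
      ≤ max (⨆ j, ⨆ (_ : le k j), f j) (⨆ j, ⨆ (_ : le k j), g j) :=
        iSup₂_le fun j hj => max_le_max (le_iSup₂ (f := fun j _ => f j) j hj)
          (le_iSup₂ (f := fun j _ => g j) j hj)
    _ ≤ max (⨆ j, ⨆ (_ : le i1 j), f j) (⨆ j, ⨆ (_ : le i2 j), g j) :=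
        max_le_max (aux15_tailSup_anti htrans f hk1) (aux15_tailSup_anti htrans g hk2)
    _ ≤ M + ε := max_le hi1.le hi2.le

/-- A weight is a Scott weight iff d̄(ψ,φ) ≥ φ(x) for every flat weight ψ with colimit x. -/
theorem stmt15 (m : GMetric X) (φ : X → ℝ≥0∞) (hφ : IsWeight m φ) :
    ScottWeight m φ ↔
      ∀ ψ : X → ℝ≥0∞, FlatWeight m ψ → ∀ x : X, IsColimit m ψ x → φ x ≤ dbar ψ φ := by
  constructor
  · -- Scott weight → the flat-weight condition
    rintro ⟨-, hscott⟩ ψ hψ x₀ hx₀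
    obtain ⟨hψw, hψ0, hψflat⟩ := hψ
    have hψlt : ∀ ε : ℝ≥0∞, 0 < ε → ∃ z, ψ z < ε := fun ε hε =>
      iInf_lt_iff.1 (by rw [hψ0]; exact hε)
    -- key directedness lemma from flatness
    have hkey : ∀ z1 ε1 z2 ε2, ψ z1 < ε1 → ψ z2 < ε2 →
        ∃ y ε, ψ y < ε ∧ ε + m.d z1 y ≤ ε1 ∧ ε + m.d z2 y ≤ ε2 := by
      intro z1 ε1 z2 ε2 h1 h2
      by_cases he1 : ε1 = ⊤
      · by_cases he2 : ε2 = ⊤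
        · obtain ⟨y, hy⟩ := hψlt 1 zero_lt_one
          exact ⟨y, 1, hy, by simp [he1], by simp [he2]⟩
        · exact ⟨z2, ε2, h2, by simp [he1], by rw [m.refl, add_zero]⟩
      · by_cases he2 : ε2 = ⊤
        · exact ⟨z1, ε1, h1, by rw [m.refl, add_zero], by simp [he2]⟩
        · set E := max ε1 ε2 with hE
          have hEne : E ≠ ⊤ := (max_lt (lt_top_iff_ne_top.2 he1) (lt_top_iff_ne_top.2 he2)).ne
          set χ1 : X → ℝ≥0∞ := fun y => m.d z1 y + (E - ε1) with hχ1
          set χ2 : X → ℝ≥0∞ := fun y => m.d z2 y + (E - ε2) with hχ2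
          have hc : ∀ z c, IsCoweight m (fun y => m.d z y + c) := by
            intro z c p q
            calc m.d z q + c ≤ (m.d z p + m.d p q) + c :=
                  add_le_add_left (m.triangle _ _ _) _
              _ = (m.d z p + c) + m.d p q := by
                  rw [add_right_comm]
          have ht : ∀ z ε, ψ z < ε → ε ≤ E → tensor ψ (fun y => m.d z y + (E - ε)) < E := by
            intro z ε hz hzE
            calc tensor ψ (fun y => m.d z y + (E - ε)) ≤ ψ z + (m.d z z + (E - ε)) :=
                  iInf_le _ z
              _ = ψ z + (E - ε) := by rw [m.refl, zero_add]
              _ < ε + (E - ε) := ENNReal.add_lt_add_right ((tsub_le_self.trans_lt (lt_top_iff_ne_top.2 hEne)).ne) hz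
              _ = E := add_tsub_cancel_of_le hzE
          have ht1 : tensor ψ χ1 < E := ht z1 ε1 h1 (le_max_left _ _)
          have ht2 : tensor ψ χ2 < E := ht z2 ε2 h2 (le_max_right _ _)
          have heq := hψflat χ1 χ2 (hc z1 _) (hc z2 _)
          have hlt : tensor ψ (fun y => max (χ1 y) (χ2 y)) < E := by
            rw [heq]; exact max_lt ht1 ht2
          obtain ⟨y, hy⟩ := iInf_lt_iff.1 hlt
          have hk : ∀ z ε, ε ≤ E → ψ y + (m.d z y + (E - ε)) ≤ ψ y + max (χ1 y) (χ2 y) →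
              ψ y + m.d z y < ε := by
            intro z ε hzE hle
            have h' : (ψ y + m.d z y) + (E - ε) < E := by
              rw [add_assoc]; exact lt_of_le_of_lt hle hy
            have := lt_tsub_iff_right.2 h'
            rwa [ENNReal.sub_sub_cancel hEne hzE] at this
          have k1 : ψ y + m.d z1 y < ε1 :=
            hk z1 ε1 (le_max_left _ _) (add_le_add_right (le_max_left _ _) _)
          have k2 : ψ y + m.d z2 y < ε2 :=
            hk z2 ε2 (le_max_right _ _) (add_le_add_right (le_max_right _ _) _)
          have hd1 : m.d z1 y ≤ ε1 := (le_add_self.trans_lt k1).le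
          have hd2 : m.d z2 y ≤ ε2 := (le_add_self.trans_lt k2).le
          refine ⟨y, min (ε1 - m.d z1 y) (ε2 - m.d z2 y),
            lt_min (lt_tsub_iff_right.2 k1) (lt_tsub_iff_right.2 k2), ?_, ?_⟩
          · calc min (ε1 - m.d z1 y) (ε2 - m.d z2 y) + m.d z1 y
                ≤ (ε1 - m.d z1 y) + m.d z1 y := add_le_add_left (min_le_left _ _) _
              _ = ε1 := tsub_add_cancel_of_le hd1
          · calc min (ε1 - m.d z1 y) (ε2 - m.d z2 y) + m.d z2 y
                ≤ (ε2 - m.d z2 y) + m.d z2 y := add_le_add_left (min_le_right _ _) _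
              _ = ε2 := tsub_add_cancel_of_le hd2
    -- the net of formal balls
    let ι₂ : Type u := {p : X × ℝ≥0∞ // ψ p.1 < p.2}
    let le' : ι₂ → ι₂ → Prop := fun p q => ballLE m p.1 q.1
    let xn : ι₂ → X := fun p => p.1.1
    have hle' : ∀ p q : ι₂, le' p q ↔ q.1.2 + m.d p.1.1 q.1.1 ≤ p.1.2 := fun p q => Iff.rfl
    have hne : Nonempty ι₂ := by
      obtain ⟨z, hz⟩ := hψlt 1 zero_lt_one
      exact ⟨⟨(z, 1), hz⟩⟩
    have hrefl : Reflexive le' := fun p => by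
      show p.1.2 + m.d p.1.1 p.1.1 ≤ p.1.2
      rw [m.refl, add_zero]
    have htrans : Transitive le' := by
      intro p q r hpq hqr
      show r.1.2 + m.d p.1.1 r.1.1 ≤ p.1.2
      calc r.1.2 + m.d p.1.1 r.1.1 ≤ r.1.2 + (m.d p.1.1 q.1.1 + m.d q.1.1 r.1.1) :=
            add_le_add_right (m.triangle _ _ _) _
        _ = (r.1.2 + m.d q.1.1 r.1.1) + m.d p.1.1 q.1.1 := by
            rw [add_comm (m.d p.1.1 q.1.1), ← add_assoc]
        _ ≤ q.1.2 + m.d p.1.1 q.1.1 := add_le_add_left hqr _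
        _ ≤ p.1.2 := hpq
    have hdir2 : ∀ p q : ι₂, ∃ r, le' p r ∧ le' q r := by
      intro p q
      obtain ⟨y, ε, hyε, hl1, hl2⟩ := hkey p.1.1 p.1.2 q.1.1 q.1.2 p.2 q.2
      exact ⟨⟨(y, ε), hyε⟩, hl1, hl2⟩
    have hFC : ForwardCauchy m le' xn := by
      refine ⟨⟨hne, hrefl, htrans, hdir2⟩,
        le_antisymm (ENNReal.le_of_forall_pos_le_add fun ε hε _ => ?_) zero_le⟩
      obtain ⟨z, hz⟩ := hψlt ε (ENNReal.coe_pos.2 hε)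
      refine iInf_le_of_le ⟨(z, ε), hz⟩
        ((iSup₂_le fun j hij => iSup₂_le fun k hjk => ?_).trans (by rw [zero_add]))
      calc m.d (xn j) (xn k) ≤ k.1.2 + m.d (xn j) (xn k) := le_add_self
        _ ≤ j.1.2 := hjk
        _ ≤ j.1.2 + m.d z (xn j) := le_self_add
        _ ≤ (ε : ℝ≥0∞) := hij
    have hYL : YonedaLimit m le' xn x₀ := by
      intro y
      have hD := hx₀ y
      simp only [dbar] at hD ⊢
      rw [← hD]
      refine le_antisymm (iSup_le fun z => ?_) (aux15_limsup_le_of_tail _ fun ε hε hfin => ?_)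
      · by_cases hz : ψ z = ⊤
        · simp [hz]
        refine tsub_le_iff_right.2 (ENNReal.le_of_forall_pos_le_add fun δ hδ hfin2 => ?_)
        have hstep : ∀ i : ι₂,
            m.d z y ≤ (⨆ j, ⨆ (_ : le' i j), m.d (xn j) y) + (ψ z + δ) := by
          intro i
          have hzi : ψ z < ψ z + δ :=
            ENNReal.lt_add_right hz (by exact_mod_cast hδ.ne')
          obtain ⟨u, hu1, hu2⟩ := hdir2 i ⟨(z, ψ z + δ), hzi⟩
          calc m.d z y ≤ m.d z (xn u) + m.d (xn u) y := m.triangle _ _ _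
            _ ≤ (ψ z + δ) + m.d (xn u) y :=
                add_le_add_left (le_add_self.trans hu2) _
            _ = m.d (xn u) y + (ψ z + δ) := add_comm _ _
            _ ≤ (⨆ j, ⨆ (_ : le' i j), m.d (xn j) y) + (ψ z + δ) :=
                add_le_add_left (le_iSup₂ (f := fun j _ => m.d (xn j) y) u hu1) _
        have h1 : m.d z y - (ψ z + δ) ≤ ⨅ i, ⨆ j, ⨆ (_ : le' i j), m.d (xn j) y :=
          le_iInf fun i => tsub_le_iff_right.2 (hstep i)
        calc m.d z y ≤ (⨅ i, ⨆ j, ⨆ (_ : le' i j), m.d (xn j) y) + (ψ z + δ) :=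
              tsub_le_iff_right.1 h1
          _ = (⨅ i, ⨆ j, ⨆ (_ : le' i j), m.d (xn j) y) + ψ z + δ := (add_assoc _ _ _).symm
      · obtain ⟨z0, hz0⟩ := hψlt ε (ENNReal.coe_pos.2 hε)
        refine ⟨⟨(z0, ε), hz0⟩, fun j hj => ?_⟩
        have hψj : ψ (xn j) ≤ ε := j.2.le.trans (le_self_add.trans hj)
        calc m.d (xn j) y ≤ (m.d (xn j) y - ψ (xn j)) + ψ (xn j) := le_tsub_add
          _ ≤ (⨆ w, m.d w y - ψ w) + ε :=
              add_le_add (le_iSup (fun w => m.d w y - ψ w) (xn j)) hψj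
    have hSc := hscott ι₂ le' xn x₀ hFC hYL
    refine hSc.trans (aux15_limsup_le_of_tail _ fun ε hε hfin => ?_)
    obtain ⟨z0, hz0⟩ := hψlt ε (ENNReal.coe_pos.2 hε)
    refine ⟨⟨(z0, ε), hz0⟩, fun j hj => ?_⟩
    have hψj : ψ (xn j) ≤ ε := j.2.le.trans (le_self_add.trans hj)
    calc φ (xn j) ≤ (φ (xn j) - ψ (xn j)) + ψ (xn j) := le_tsub_add
      _ ≤ dbar ψ φ + ε := add_le_add (le_iSup (fun w => φ w - ψ w) (xn j)) hψj
  · -- the flat-weight condition → Scott weight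
    intro hRHS
    refine ⟨hφ, fun ι le x a hFC hYL => ?_⟩
    obtain ⟨⟨hne, hrefl, htrans, hdir⟩, hcauchy⟩ := hFC
    set ψ : X → ℝ≥0∞ := fun z => ⨅ i, ⨆ j, ⨆ (_ : le i j), m.d z (x j) with hψdef
    have key0 : ∀ ε : ℝ≥0∞, 0 < ε → ∃ i,
        (⨆ j, ⨆ (_ : le i j), ⨆ k, ⨆ (_ : le j k), m.d (x j) (x k)) < ε := fun ε hε =>
      iInf_lt_iff.1 (by rw [hcauchy]; exact hε)
    have hψx : ∀ i, ψ (x i) ≤ ⨆ j, ⨆ (_ : le i j), ⨆ k, ⨆ (_ : le j k), m.d (x j) (x k) := by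
      intro i
      refine (iInf_le _ i).trans (iSup₂_le fun j hj => ?_)
      exact (le_iSup₂ (f := fun k _ => m.d (x i) (x k)) j hj).trans
        (le_iSup₂ (f := fun j _ => ⨆ k, ⨆ (_ : le j k), m.d (x j) (x k)) i (hrefl i))
    have hψ0 : (⨅ z, ψ z) = 0 := by
      refine le_antisymm (ENNReal.le_of_forall_pos_le_add fun ε hε _ => ?_) zero_le
      obtain ⟨i, hi⟩ := key0 ε (ENNReal.coe_pos.2 hε)
      calc (⨅ z, ψ z) ≤ ψ (x i) := iInf_le _ _
        _ ≤ _ := hψx i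
        _ ≤ 0 + ε := by rw [zero_add]; exact hi.le
    have hψw : IsWeight m ψ := by
      intro z w
      have hstep : ∀ i, (⨆ j, ⨆ (_ : le i j), m.d z (x j)) ≤
          (⨆ j, ⨆ (_ : le i j), m.d w (x j)) + m.d z w := by
        intro i
        refine iSup₂_le fun j hj => ?_
        calc m.d z (x j) ≤ m.d z w + m.d w (x j) := m.triangle _ _ _
          _ ≤ m.d z w + ⨆ j, ⨆ (_ : le i j), m.d w (x j) :=
              add_le_add_right (le_iSup₂ (f := fun j _ => m.d w (x j)) j hj) _
          _ = (⨆ j, ⨆ (_ : le i j), m.d w (x j)) + m.d z w := add_comm _ _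
      have h1 : ψ z - m.d z w ≤ ⨅ i, ⨆ j, ⨆ (_ : le i j), m.d w (x j) :=
        le_iInf fun i => tsub_le_iff_right.2 ((iInf_le _ i).trans (hstep i))
      exact tsub_le_iff_right.1 h1
    have htensor : ∀ χ : X → ℝ≥0∞, IsCoweight m χ →
        tensor ψ χ = ⨅ i, ⨆ j, ⨆ (_ : le i j), χ (x j) := by
      intro χ hχ
      refine le_antisymm ?_ (le_iInf fun y => ?_)
      · refine ENNReal.le_of_forall_pos_le_add fun ε hε hfin => ?_
        obtain ⟨i₀, hi₀⟩ := key0 ε (ENNReal.coe_pos.2 hε)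
        have hstep : ∀ i, tensor ψ χ ≤ (⨆ j, ⨆ (_ : le i j), χ (x j)) + ε := by
          intro i
          obtain ⟨k, hk0, hki⟩ := hdir i₀ i
          calc tensor ψ χ ≤ ψ (x k) + χ (x k) := iInf_le _ _
            _ ≤ (ε : ℝ≥0∞) + χ (x k) := by
                refine add_le_add_left ((hψx k).trans ?_) _
                exact ((aux15_tailSup_anti htrans _ hk0).trans hi₀.le)
            _ ≤ (ε : ℝ≥0∞) + ⨆ j, ⨆ (_ : le i j), χ (x j) :=
                add_le_add_right (le_iSup₂ (f := fun j _ => χ (x j)) k hki) _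
            _ = (⨆ j, ⨆ (_ : le i j), χ (x j)) + ε := add_comm _ _
        have h1 : tensor ψ χ - ε ≤ ⨅ i, ⨆ j, ⨆ (_ : le i j), χ (x j) :=
          le_iInf fun i => tsub_le_iff_right.2 (hstep i)
        exact tsub_le_iff_right.1 h1
      · -- limsup χ(x j) ≤ ψ y + χ y
        have hstep : ∀ i, (⨅ i, ⨆ j, ⨆ (_ : le i j), χ (x j)) ≤
            (⨆ j, ⨆ (_ : le i j), m.d y (x j)) + χ y := by
          intro i
          refine (iInf_le _ i).trans (iSup₂_le fun j hj => ?_)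
          calc χ (x j) ≤ χ y + m.d y (x j) := hχ y (x j)
            _ ≤ χ y + ⨆ j, ⨆ (_ : le i j), m.d y (x j) :=
                add_le_add_right (le_iSup₂ (f := fun j _ => m.d y (x j)) j hj) _
            _ = (⨆ j, ⨆ (_ : le i j), m.d y (x j)) + χ y := add_comm _ _
        have h1 : (⨅ i, ⨆ j, ⨆ (_ : le i j), χ (x j)) - χ y ≤ ψ y :=
          le_iInf fun i => tsub_le_iff_right.2 (hstep i)
        exact tsub_le_iff_right.1 h1
    have hflat : FlatWeight m ψ := by
      refine ⟨hψw, hψ0, fun χ1 χ2 h1 h2 => ?_⟩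
      have hmax : IsCoweight m (fun y => max (χ1 y) (χ2 y)) := fun p q =>
        max_le ((h1 p q).trans (add_le_add_left (le_max_left _ _) _))
          ((h2 p q).trans (add_le_add_left (le_max_right _ _) _))
      rw [htensor _ h1, htensor _ h2, htensor _ hmax]
      exact aux15_limsup_max htrans hdir (fun j => χ1 (x j)) (fun j => χ2 (x j))
    have hcl : IsColimit m ψ a := by
      intro y
      simp only [dbar]
      refine le_antisymm (iSup_le fun z => ?_)
        (ENNReal.le_of_forall_pos_le_add fun ε hε hD => ?_)
      · refine tsub_le_iff_right.2 ?_
        rw [add_comm]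
        refine aux15_le_limsup_add hdir (fun j => m.d z (x j)) fun δ hδ hfin => ?_
        have hday : m.d a y ≠ ⊤ := (le_add_self.trans_lt hfin).ne
        have hlt : (⨅ i, ⨆ j, ⨆ (_ : le i j), m.d (x j) y) < m.d a y + δ := by
          rw [← hYL y]
          exact ENNReal.lt_add_right hday (by exact_mod_cast hδ.ne')
        obtain ⟨i, hi⟩ := iInf_lt_iff.1 hlt
        refine ⟨i, fun j hj => ?_⟩
        calc m.d z y ≤ m.d z (x j) + m.d (x j) y := m.triangle _ _ _
          _ ≤ m.d z (x j) + (m.d a y + δ) :=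
              add_le_add_right ((le_iSup₂ (f := fun j _ => m.d (x j) y) j hj).trans hi.le) _
      · obtain ⟨i, hi⟩ := key0 ε (ENNReal.coe_pos.2 hε)
        have h1 : m.d a y ≤ ⨆ k, ⨆ (_ : le i k), m.d (x k) y := by
          rw [hYL y]; exact iInf_le _ i
        refine h1.trans (iSup₂_le fun k hk => ?_)
        have hψk : ψ (x k) ≤ ε :=
          ((hψx k).trans (aux15_tailSup_anti htrans _ hk)).trans hi.le
        calc m.d (x k) y ≤ (m.d (x k) y - ψ (x k)) + ψ (x k) := le_tsub_add
          _ ≤ (⨆ w, m.d w y - ψ w) + ε :=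
              add_le_add (le_iSup (fun w => m.d w y - ψ w) (x k)) hψk
    have hmain := hRHS ψ hflat a hcl
    refine hmain.trans (iSup_le fun z => ?_)
    refine tsub_le_iff_right.2 ?_
    rw [add_comm]
    refine aux15_le_limsup_add hdir (fun j => m.d z (x j)) fun δ hδ hfin => ?_
    have hLne : (⨅ i, ⨆ j, ⨆ (_ : le i j), φ (x j)) ≠ ⊤ := (le_add_self.trans_lt hfin).ne
    have hlt : (⨅ i, ⨆ j, ⨆ (_ : le i j), φ (x j)) <
        (⨅ i, ⨆ j, ⨆ (_ : le i j), φ (x j)) + δ :=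
      ENNReal.lt_add_right hLne (by exact_mod_cast hδ.ne')
    obtain ⟨i, hi⟩ := iInf_lt_iff.1 hlt
    refine ⟨i, fun j hj => ?_⟩
    calc φ z ≤ φ (x j) + m.d z (x j) := hφ z (x j)
      _ ≤ ((⨅ i, ⨆ j, ⨆ (_ : le i j), φ (x j)) + δ) + m.d z (x j) :=
          add_le_add_left ((le_iSup₂ (f := fun j _ => φ (x j)) j hj).trans hi.le) _
      _ = m.d z (x j) + ((⨅ i, ⨆ j, ⨆ (_ : le i j), φ (x j)) + δ) := add_comm _ _
end

section
/- For each metric space (X,d), the c-Scott topology (the topological coreflection of the Scott approach distance) is coarser than the generalized Scott topology: for every Scott weight φ, the set {y ∈ X | φ(y) > 0} is generalized Scott open. -/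
open ENNReal

universe u

variable {X : Type u}

/-- For every Scott weight φ, the set {y | φ(y) > 0} is generalized Scott open; hence the
c-Scott topology is coarser than the generalized Scott topology. -/
theorem stmt16 (m : GMetric X) (φ : X → ℝ≥0∞) (hφ : ScottWeight m φ) :
    ∀ (ι : Type u) (le : ι → ι → Prop) (x : ι → X) (a : X),
      ForwardCauchy m le x → YonedaLimit m le x a → 0 < φ a →
      ∃ ε : ℝ≥0∞, 0 < ε ∧ ∃ i, ∀ j, le i j → ∀ y, m.d (x j) y < ε → 0 < φ y := by
  intro ι le x a hFC hYL ha
  obtain ⟨hdir, hcauchy⟩ := hFC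
  set c := min (φ a) 1 with hc
  have hc0 : 0 < c := lt_min ha one_pos
  have hcne : c ≠ ∞ := ne_top_of_le_ne_top one_ne_top (min_le_right _ _)
  set ε := c / 4 with hε
  have hε0 : 0 < ε := ENNReal.div_pos hc0.ne' (by norm_num)
  have hεne : ε ≠ ∞ := (ENNReal.div_lt_top hcne (by norm_num)).ne
  have h3ε : ε + ε + ε < c := by
    have h4 : ε + ε + ε + ε = c := by
      rw [hε, ENNReal.div_add_div_same, ENNReal.div_add_div_same,
        ENNReal.div_add_div_same]
      have : c + c + c + c = c * 4 := by ring
      rw [this, mul_div_assoc, ENNReal.div_self (by norm_num) (by norm_num), mul_one]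
    calc ε + ε + ε < ε + ε + ε + ε :=
          ENNReal.lt_add_right (by simp [ENNReal.add_ne_top, hεne]) hε0.ne'
      _ = c := h4
  have h1 : (⨅ i, ⨆ j, ⨆ (_ : le i j), ⨆ k, ⨆ (_ : le j k), m.d (x j) (x k)) < ε := by
    rw [hcauchy]; exact hε0
  obtain ⟨i₀, hi₀⟩ := iInf_lt_iff.mp h1
  have h2 : ε + ε + ε < ⨆ j, ⨆ (_ : le i₀ j), φ (x j) :=
    lt_of_lt_of_le h3ε (le_trans (min_le_left _ _)
      (le_trans (hφ.2 ι le x a ⟨hdir, hcauchy⟩ hYL) (iInf_le _ i₀)))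
  rw [lt_iSup_iff] at h2
  obtain ⟨k₀, hk₀⟩ := h2
  rw [lt_iSup_iff] at hk₀
  obtain ⟨hk₀le, hk₀⟩ := hk₀
  refine ⟨ε, hε0, k₀, ?_⟩
  intro j hj y hy
  have hd : m.d (x k₀) (x j) < ε := by
    refine lt_of_le_of_lt ?_ hi₀
    exact le_iSup₂_of_le k₀ hk₀le (le_iSup₂_of_le j hj le_rfl)
  have hj2 : ε + ε < φ (x j) := by
    have h := hφ.1 (x k₀) (x j)
    have : ε + ε + ε < φ (x j) + ε :=
      lt_of_lt_of_le hk₀ (le_trans h (add_le_add le_rfl hd.le))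
    exact (ENNReal.add_lt_add_iff_right hεne).mp this
  have hy2 : ε < φ y := by
    have h := hφ.1 (x j) y
    have : ε + ε < φ y + ε :=
      lt_of_lt_of_le hj2 (le_trans h (add_le_add le_rfl hy.le))
    exact (ENNReal.add_lt_add_iff_right hεne).mp this
  exact lt_of_le_of_lt zero_le hy2
end

section
/- Let (X,d) be a metric space and {(x_i,r_i)}_i a directed subset of the poset of formal balls (BX, ⊑), where (x,r) ⊑ (y,s) iff r ≥ s + d(x,y). If x is a Yoneda limit of the underlying forward Cauchy net {x_i} and r = inf_i r_i, then (x,r) is a join of {(x_i,r_i)}_i in (BX, ⊑). -/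
open ENNReal

universe u

variable {X : Type u}

/-- If x is a Yoneda limit of the underlying net of a directed set of formal balls and
r = inf r_i, then (x,r) is a join of the directed set in (BX, ⊑). -/
theorem stmt17 (m : GMetric X) (D : Set (X × ℝ≥0∞))
    (hne : D.Nonempty) (hfin : ∀ p ∈ D, p.2 < ∞)
    (hdir : ∀ p ∈ D, ∀ q ∈ D, ∃ z ∈ D, ballLE m p z ∧ ballLE m q z)
    (a : X)
    (hY : YonedaLimit m (fun i j : D => ballLE m i.1 j.1)
      (fun i : D => (i : X × ℝ≥0∞).1) a)
    (r : ℝ≥0∞) (hr : r = ⨅ p : D, (p : X × ℝ≥0∞).2) :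
    (∀ p ∈ D, ballLE m p (a, r)) ∧
    ∀ q : X × ℝ≥0∞, q.2 < ∞ → (∀ p ∈ D, ballLE m p q) → ballLE m (a, r) q := by
  have hDne : Nonempty D := hne.to_subtype
  constructor
  · intro p hp
    show r + m.d p.1 a ≤ p.2
    have h0 : (⨅ i : D, ⨆ j : D, ⨆ (_ : ballLE m i.1 j.1),
        m.d (j : X × ℝ≥0∞).1 a) = 0 := by
      have := hY a
      rw [m.refl a] at this
      exact this.symm
    apply ENNReal.le_of_forall_pos_le_add
    intro ε hε _
    have hlt : (⨅ i : D, ⨆ j : D, ⨆ (_ : ballLE m i.1 j.1),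
        m.d (j : X × ℝ≥0∞).1 a) < (ε : ℝ≥0∞) := by
      rw [h0]; exact_mod_cast hε
    obtain ⟨i, hi⟩ := iInf_lt_iff.mp hlt
    obtain ⟨k, hkD, hik, hpk⟩ := hdir i.1 i.2 p hp
    have hka : m.d k.1 a ≤ ε := by
      refine le_of_lt (lt_of_le_of_lt ?_ hi)
      exact le_iSup₂ (f := fun (j : D) (_ : ballLE m i.1 j.1) =>
        m.d (j : X × ℝ≥0∞).1 a) ⟨k, hkD⟩ hik
    have hrk : r ≤ k.2 := hr ▸ iInf_le (fun p : D => (p : X × ℝ≥0∞).2) ⟨k, hkD⟩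
    calc r + m.d p.1 a ≤ r + (m.d p.1 k.1 + m.d k.1 a) :=
          add_le_add_right (m.triangle _ _ _) r
      _ = (r + m.d p.1 k.1) + m.d k.1 a := (add_assoc _ _ _).symm
      _ ≤ (k.2 + m.d p.1 k.1) + ε := add_le_add (add_le_add_left hrk _) hka
      _ ≤ p.2 + ε := add_le_add_left hpk _
  · intro q hq hqall
    show q.2 + m.d a q.1 ≤ r
    rw [hr]
    refine le_iInf fun p => ?_
    have hda : m.d a q.1 ≤ ⨆ j : D, ⨆ (_ : ballLE m p.1 j.1),
        m.d (j : X × ℝ≥0∞).1 q.1 := by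
      rw [hY q.1]
      exact iInf_le _ p
    have hq2 : q.2 ≤ (p : X × ℝ≥0∞).2 :=
      le_trans (le_add_right le_rfl) (hqall p.1 p.2)
    calc q.2 + m.d a q.1
        ≤ q.2 + ⨆ j : D, ⨆ (_ : ballLE m p.1 j.1), m.d (j : X × ℝ≥0∞).1 q.1 :=
          add_le_add_right hda _
      _ = ⨆ j : D, (q.2 + ⨆ (_ : ballLE m p.1 j.1), m.d (j : X × ℝ≥0∞).1 q.1) :=
          ENNReal.add_iSup _
      _ ≤ (p : X × ℝ≥0∞).2 := by
          refine iSup_le fun j => ?_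
          by_cases hj : ballLE m p.1 j.1
          · rw [ciSup_pos hj]
            calc q.2 + m.d (j : X × ℝ≥0∞).1 q.1 ≤ (j : X × ℝ≥0∞).2 :=
                  hqall j.1 j.2
              _ ≤ (p : X × ℝ≥0∞).2 := le_trans (le_add_right le_rfl) hj
          · simp [hj, hq2]
end

section
/- An element a of a metric space (X,d) is compact if and only if for every flat weight φ of (X,d) that has a colimit, d(a, colim φ) = φ(a). -/
open ENNReal

universe u

variable {X : Type u}

namespace Stmt18

variable {ι : Type*} {m : GMetric X} {le : ι → ι → Prop} {x : ι → X}

/-- The weight generated by a net. -/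
noncomputable def netW (m : GMetric X) (le : ι → ι → Prop) (x : ι → X) (y : X) : ℝ≥0∞ :=
  ⨅ i, ⨆ j, ⨆ _ : le i j, m.d y (x j)

theorem tail_small (hfc : ForwardCauchy m le x) {ε : ℝ≥0∞} (hε : 0 < ε) :
    ∃ i, ∀ j, le i j → netW m le x (x j) ≤ ε := by
  obtain ⟨i, hi⟩ := iInf_lt_iff.mp (hfc.2 ▸ hε :
    (⨅ i, ⨆ j, ⨆ _ : le i j, ⨆ k, ⨆ _ : le j k, m.d (x j) (x k)) < ε)
  refine ⟨i, fun j hj => ?_⟩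
  refine le_trans (iInf_le _ j) ?_
  refine le_trans ?_ hi.le
  exact le_iSup₂ (f := fun j (_ : le i j) => ⨆ k, ⨆ _ : le j k, m.d (x j) (x k)) j hj

theorem netW_weight : IsWeight m (netW m le x) := by
  intro y z
  rw [netW, netW, ENNReal.iInf_add]
  refine le_iInf fun i => le_trans (iInf_le _ i) ?_
  refine iSup₂_le fun j hj => ?_
  refine le_trans (m.triangle y z (x j)) ?_
  calc m.d y z + m.d z (x j)
      ≤ m.d y z + ⨆ j, ⨆ _ : le i j, m.d z (x j) :=
        add_le_add_right (le_iSup₂ (f := fun j (_ : le i j) => m.d z (x j)) j hj) _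
    _ = (⨆ j, ⨆ _ : le i j, m.d z (x j)) + m.d y z := add_comm _ _

theorem netW_inf_zero (hfc : ForwardCauchy m le x) : (⨅ y, netW m le x y) = 0 := by
  refine le_antisymm (ENNReal.le_of_forall_pos_le_add fun ε hε _ => ?_) zero_le
  obtain ⟨i, hi⟩ := tail_small hfc (by exact_mod_cast hε : (0:ℝ≥0∞) < ε)
  calc (⨅ y, netW m le x y) ≤ netW m le x (x i) := iInf_le _ _
  _ ≤ ε := hi i (hfc.1.2.1 i)
  _ ≤ 0 + ε := by rw [zero_add]

theorem netW_tensor (hfc : ForwardCauchy m le x) {ψ : X → ℝ≥0∞} (hψ : IsCoweight m ψ) :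
    tensor (netW m le x) ψ = ⨅ i, ⨆ j, ⨆ _ : le i j, ψ (x j) := by
  refine le_antisymm ?_ ?_
  · refine ENNReal.le_of_forall_pos_le_add fun ε hε _ => ?_
    have hε' : (0:ℝ≥0∞) < ε := by exact_mod_cast hε
    obtain ⟨i, hi⟩ := tail_small hfc hε'
    rw [add_comm, ENNReal.add_iInf]
    refine le_iInf fun i' => ?_
    obtain ⟨k, hik, hi'k⟩ := hfc.1.2.2.2 i i'
    calc tensor (netW m le x) ψ ≤ netW m le x (x k) + ψ (x k) := iInf_le _ _
    _ ≤ ε + ψ (x k) := add_le_add_left (hi k hik) _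
    _ ≤ ε + ⨆ j, ⨆ _ : le i' j, ψ (x j) :=
        add_le_add_right (le_iSup₂ (f := fun j (_ : le i' j) => ψ (x j)) k hi'k) _
  · refine le_iInf fun z => ?_
    rw [netW, ENNReal.iInf_add]
    refine le_iInf fun i => le_trans (iInf_le _ i) ?_
    refine iSup₂_le fun j hj => ?_
    calc ψ (x j) ≤ ψ z + m.d z (x j) := hψ z (x j)
    _ ≤ ψ z + ⨆ j, ⨆ _ : le i j, m.d z (x j) :=
        add_le_add_right (le_iSup₂ (f := fun j (_ : le i j) => m.d z (x j)) j hj) _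
    _ = (⨆ j, ⨆ _ : le i j, m.d z (x j)) + ψ z := add_comm _ _



theorem netW_flat (hfc : ForwardCauchy m le x) : FlatWeight m (netW m le x) := by
  refine ⟨netW_weight, netW_inf_zero hfc, fun ψ₁ ψ₂ h₁ h₂ => ?_⟩
  have hmax : IsCoweight m fun z => max (ψ₁ z) (ψ₂ z) := fun u v =>
    max_le (le_trans (h₁ u v) (add_le_add_left (le_max_left _ _) _))
      (le_trans (h₂ u v) (add_le_add_left (le_max_right _ _) _))
  rw [netW_tensor hfc h₁, netW_tensor hfc h₂, netW_tensor hfc hmax]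
  have hrw : ∀ i, (⨆ j, ⨆ _ : le i j, max (ψ₁ (x j)) (ψ₂ (x j)))
      = (⨆ j, ⨆ _ : le i j, ψ₁ (x j)) ⊔ (⨆ j, ⨆ _ : le i j, ψ₂ (x j)) := by
    intro i
    simp_rw [iSup_sup_eq]
  simp_rw [hrw]
  refine le_antisymm ?_ (le_iInf fun i => sup_le_sup (iInf_le _ i) (iInf_le _ i))
  rw [iInf_sup_eq]
  refine le_iInf fun i₁ => ?_
  rw [sup_iInf_eq]
  refine le_iInf fun i₂ => ?_
  obtain ⟨k, h1k, h2k⟩ := hfc.1.2.2.2 i₁ i₂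
  have anti : ∀ (ψ : X → ℝ≥0∞) (i : ι), le i k →
      (⨆ j, ⨆ _ : le k j, ψ (x j)) ≤ ⨆ j, ⨆ _ : le i j, ψ (x j) := fun ψ i hik =>
    iSup₂_le fun j hkj =>
      le_iSup₂ (f := fun j (_ : le i j) => ψ (x j)) j (hfc.1.2.2.1 hik hkj)
  exact iInf_le_of_le k (sup_le_sup (anti ψ₁ i₁ h1k) (anti ψ₂ i₂ h2k))

theorem netW_colimit (hfc : ForwardCauchy m le x) {b : X} (hyl : YonedaLimit m le x b) :
    IsColimit m (netW m le x) b := by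
  intro y
  rw [hyl y, dbar]
  refine le_antisymm ?_ ?_
  · refine iSup_le fun z => ?_
    rw [tsub_le_iff_left]
    have key : (netW m le x z) + (⨅ i, ⨆ j, ⨆ _ : le i j, m.d (x j) y)
        = ⨅ i, ((⨆ j, ⨆ _ : le i j, m.d z (x j)) + ⨆ j, ⨆ _ : le i j, m.d (x j) y) := by
      refine ENNReal.iInf_add_iInf fun i₁ i₂ => ?_
      obtain ⟨k, h1k, h2k⟩ := hfc.1.2.2.2 i₁ i₂
      refine ⟨k, add_le_add ?_ ?_⟩
      · exact iSup₂_le fun j hkj =>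
          le_iSup₂ (f := fun j (_ : le i₁ j) => m.d z (x j)) j (hfc.1.2.2.1 h1k hkj)
      · exact iSup₂_le fun j hkj =>
          le_iSup₂ (f := fun j (_ : le i₂ j) => m.d (x j) y) j (hfc.1.2.2.1 h2k hkj)
    rw [netW] at key ⊢
    rw [key]
    refine le_iInf fun i => ?_
    calc m.d z y ≤ m.d z (x i) + m.d (x i) y := m.triangle z (x i) y
    _ ≤ _ := add_le_add
        (le_iSup₂ (f := fun j (_ : le i j) => m.d z (x j)) i (hfc.1.2.1 i))
        (le_iSup₂ (f := fun j (_ : le i j) => m.d (x j) y) i (hfc.1.2.1 i))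
  · refine ENNReal.le_of_forall_pos_le_add fun ε hε _ => ?_
    have hε' : (0:ℝ≥0∞) < ε := by exact_mod_cast hε
    obtain ⟨i, hi⟩ := tail_small hfc hε'
    refine le_trans (iInf_le _ i) ?_
    refine iSup₂_le fun j hj => ?_
    calc m.d (x j) y ≤ (m.d (x j) y - netW m le x (x j)) + netW m le x (x j) := le_tsub_add
    _ ≤ (⨆ z, m.d z y - netW m le x z) + ε :=
        add_le_add (le_iSup (fun z => m.d z y - netW m le x z) (x j)) (hi j hj)
theorem forward (m : GMetric X) (a : X) (hcomp : IsCompactElem m a) (φ : X → ℝ≥0∞)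
    (hφ : FlatWeight m φ) (c : X) (hc : IsColimit m φ c) : m.d a c = φ a := by
  obtain ⟨hw, hinf, hflat⟩ := hφ
  -- the colimit dominates: d z c ≤ φ z
  have hle : ∀ z, m.d z c ≤ φ z := by
    intro z
    have h0 : dbar φ (fun z => m.d z c) = 0 := by rw [hc c, m.refl]
    have h1 : m.d z c - φ z = 0 :=
      le_antisymm (h0 ▸ le_iSup (fun z => m.d z c - φ z) z) zero_le
    exact tsub_eq_zero_iff_le.mp h1
  have hexists : ∀ ε : ℝ≥0∞, 0 < ε → ∃ z, φ z < ε := fun ε hε =>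
    iInf_lt_iff.mp (hinf ▸ hε : (⨅ z, φ z) < ε)
  -- the formal-ball net
  let ι' : Type u := {p : X × ℝ≥0∞ // φ p.1 < p.2 ∧ p.2 ≠ ∞}
  let le' : ι' → ι' → Prop := fun p q => ballLE m p.1 q.1
  let xn : ι' → X := fun p => p.1.1
  have hle'_def : ∀ p q : ι', le' p q ↔ q.1.2 + m.d p.1.1 q.1.1 ≤ p.1.2 := fun p q => Iff.rfl
  have hrefl : Reflexive le' := by
    intro p
    show p.1.2 + m.d p.1.1 p.1.1 ≤ p.1.2
    rw [m.refl, add_zero]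
  have htrans : Transitive le' := by
    intro p q r hpq hqr
    show r.1.2 + m.d p.1.1 r.1.1 ≤ p.1.2
    calc r.1.2 + m.d p.1.1 r.1.1
        ≤ r.1.2 + (m.d p.1.1 q.1.1 + m.d q.1.1 r.1.1) := add_le_add_right (m.triangle _ _ _) _
      _ = (r.1.2 + m.d q.1.1 r.1.1) + m.d p.1.1 q.1.1 := by ring
      _ ≤ q.1.2 + m.d p.1.1 q.1.1 := add_le_add_left hqr _
      _ ≤ p.1.2 := hpq
  have hdir : ∀ p q : ι', ∃ k, le' p k ∧ le' q k := by
    rintro ⟨⟨x₁, r⟩, hxr, hr⟩ ⟨⟨y₁, s⟩, hys, hs⟩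
    have hc₁ : IsCoweight m (fun z => m.d x₁ z + s) := by
      intro u v
      calc m.d x₁ v + s ≤ (m.d x₁ u + m.d u v) + s := add_le_add_left (m.triangle _ _ _) _
        _ = (m.d x₁ u + s) + m.d u v := by ring
    have hc₂ : IsCoweight m (fun z => m.d y₁ z + r) := by
      intro u v
      calc m.d y₁ v + r ≤ (m.d y₁ u + m.d u v) + r := add_le_add_left (m.triangle _ _ _) _
        _ = (m.d y₁ u + r) + m.d u v := by ring
    have hb₁ : tensor φ (fun z => m.d x₁ z + s) ≤ φ x₁ + s := by
      refine le_trans (iInf_le _ x₁) ?_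
      show φ x₁ + (m.d x₁ x₁ + s) ≤ φ x₁ + s
      rw [m.refl, zero_add]
    have hb₂ : tensor φ (fun z => m.d y₁ z + r) ≤ φ y₁ + r := by
      refine le_trans (iInf_le _ y₁) ?_
      show φ y₁ + (m.d y₁ y₁ + r) ≤ φ y₁ + r
      rw [m.refl, zero_add]
    have hlt : tensor φ (fun z => max (m.d x₁ z + s) (m.d y₁ z + r)) < r + s := by
      rw [hflat _ _ hc₁ hc₂]
      refine max_lt (lt_of_le_of_lt hb₁ ?_) (lt_of_le_of_lt hb₂ ?_)
      · exact (ENNReal.add_lt_add_iff_right hs).mpr hxr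
      · rw [add_comm r s]
        exact (ENNReal.add_lt_add_iff_right hr).mpr hys
    obtain ⟨z, hz0⟩ := iInf_lt_iff.mp hlt
    have hz : φ z + max (m.d x₁ z + s) (m.d y₁ z + r) < r + s := hz0
    have h1 : φ z + m.d x₁ z < r := by
      refine (ENNReal.add_lt_add_iff_right hs).mp ?_
      calc (φ z + m.d x₁ z) + s = φ z + (m.d x₁ z + s) := by ring
        _ ≤ φ z + max (m.d x₁ z + s) (m.d y₁ z + r) := add_le_add_right (le_max_left _ _) _
        _ < r + s := hz
    have h2 : φ z + m.d y₁ z < s := by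
      refine (ENNReal.add_lt_add_iff_right hr).mp ?_
      calc (φ z + m.d y₁ z) + r = φ z + (m.d y₁ z + r) := by ring
        _ ≤ φ z + max (m.d x₁ z + s) (m.d y₁ z + r) := add_le_add_right (le_max_right _ _) _
        _ < r + s := hz
        _ = s + r := add_comm r s
    have hdx : m.d x₁ z ≤ r := le_of_lt (lt_of_le_of_lt le_add_self h1)
    have hdy : m.d y₁ z ≤ s := le_of_lt (lt_of_le_of_lt le_add_self h2)
    have hφt : φ z < min (r - m.d x₁ z) (s - m.d y₁ z) :=
      lt_min (lt_tsub_iff_right.mpr h1) (lt_tsub_iff_right.mpr h2)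
    have htne : min (r - m.d x₁ z) (s - m.d y₁ z) ≠ ∞ :=
      ne_top_of_le_ne_top hr ((min_le_left _ _).trans tsub_le_self)
    refine ⟨⟨(z, min (r - m.d x₁ z) (s - m.d y₁ z)), hφt, htne⟩, ?_, ?_⟩
    · show min (r - m.d x₁ z) (s - m.d y₁ z) + m.d x₁ z ≤ r
      calc min (r - m.d x₁ z) (s - m.d y₁ z) + m.d x₁ z
          ≤ (r - m.d x₁ z) + m.d x₁ z := add_le_add_left (min_le_left _ _) _
        _ = r := tsub_add_cancel_of_le hdx
    · show min (r - m.d x₁ z) (s - m.d y₁ z) + m.d y₁ z ≤ s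
      calc min (r - m.d x₁ z) (s - m.d y₁ z) + m.d y₁ z
          ≤ (s - m.d y₁ z) + m.d y₁ z := add_le_add_left (min_le_right _ _) _
        _ = s := tsub_add_cancel_of_le hdy
  have hne : Nonempty ι' := by
    obtain ⟨z₀, hz₀⟩ := hexists 1 zero_lt_one
    exact ⟨⟨(z₀, 1), hz₀, one_ne_top⟩⟩
  have hdiridx : DirIdx le' := ⟨hne, hrefl, htrans, hdir⟩
  have hradsmall : ∀ ε : ℝ≥0∞, 0 < ε → ∃ i : ι', i.1.2 ≤ ε := by
    intro ε hε
    obtain ⟨z, hz⟩ := hexists (min ε 1) (lt_min hε zero_lt_one)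
    exact ⟨⟨(z, min ε 1), hz, ne_top_of_le_ne_top one_ne_top (min_le_right _ _)⟩,
      min_le_left _ _⟩
  have hrefine : ∀ (i : ι') (ε : ℝ≥0∞), 0 < ε → ∃ j, le' i j ∧ j.1.2 ≤ ε := by
    intro i ε hε
    obtain ⟨i₀, hi₀⟩ := hradsmall ε hε
    obtain ⟨k, hik, hi₀k⟩ := hdir i i₀
    exact ⟨k, hik, le_trans (le_trans le_self_add hi₀k) hi₀⟩
  have hradinf : (⨅ i : ι', i.1.2) = 0 := by
    refine le_antisymm (ENNReal.le_of_forall_pos_le_add fun ε hε _ => ?_) zero_le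
    obtain ⟨i, hi⟩ := hradsmall ε (ENNReal.coe_pos.mpr hε)
    rw [zero_add]
    exact le_trans (iInf_le _ i) hi
  have hfc : ForwardCauchy m le' xn := by
    refine ⟨hdiridx, le_antisymm (ENNReal.le_of_forall_pos_le_add fun ε hε _ => ?_) zero_le⟩
    obtain ⟨i, hi⟩ := hradsmall ε (ENNReal.coe_pos.mpr hε)
    rw [zero_add]
    refine le_trans (iInf_le _ i) (le_trans ?_ hi)
    refine iSup₂_le fun j hij => iSup₂_le fun k hjk => ?_
    calc m.d (xn j) (xn k) ≤ k.1.2 + m.d j.1.1 k.1.1 := le_add_self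
      _ ≤ j.1.2 := hjk
      _ ≤ j.1.2 + m.d i.1.1 j.1.1 := le_self_add
      _ ≤ i.1.2 := hij
  have hyl : YonedaLimit m le' xn c := by
    intro y
    rw [← hc y]
    refine le_antisymm ?_ ?_
    · refine iSup_le fun z => ?_
      rw [tsub_le_iff_left]
      rcases eq_or_ne (φ z) ∞ with hz | hz
      · rw [hz, top_add]; exact le_top
      rw [ENNReal.add_iInf]
      refine le_iInf fun i => ?_
      refine ENNReal.le_of_forall_pos_le_add fun ε hε _ => ?_
      have hδ0 : (0:ℝ≥0∞) < min (ε:ℝ≥0∞) 1 := lt_min (ENNReal.coe_pos.mpr hε) zero_lt_one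
      have hδtop : min (ε:ℝ≥0∞) 1 ≠ ∞ := ne_top_of_le_ne_top one_ne_top (min_le_right _ _)
      have hzlt : φ z < φ z + min (ε:ℝ≥0∞) 1 := ENNReal.lt_add_right hz hδ0.ne'
      have hzne : φ z + min (ε:ℝ≥0∞) 1 ≠ ∞ := ENNReal.add_ne_top.mpr ⟨hz, hδtop⟩
      obtain ⟨k, hik, hzk⟩ := hdir i ⟨(z, φ z + min (ε:ℝ≥0∞) 1), hzlt, hzne⟩
      have hdzk : m.d z (xn k) ≤ φ z + min (ε:ℝ≥0∞) 1 := le_trans le_add_self hzk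
      calc m.d z y ≤ m.d z (xn k) + m.d (xn k) y := m.triangle _ _ _
        _ ≤ (φ z + min (ε:ℝ≥0∞) 1) + ⨆ j, ⨆ _ : le' i j, m.d (xn j) y :=
            add_le_add hdzk (le_iSup₂ (f := fun j (_ : le' i j) => m.d (xn j) y) k hik)
        _ = (φ z + ⨆ j, ⨆ _ : le' i j, m.d (xn j) y) + min (ε:ℝ≥0∞) 1 := by ring
        _ ≤ (φ z + ⨆ j, ⨆ _ : le' i j, m.d (xn j) y) + ε :=
            add_le_add_right (min_le_left _ _) _
    · have step : (⨅ i : ι', ⨆ j, ⨆ _ : le' i j, m.d (xn j) y)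
          ≤ ⨅ i : ι', (dbar φ (fun z => m.d z y) + i.1.2) := by
        refine le_iInf fun i => le_trans (iInf_le _ i) ?_
        refine iSup₂_le fun j hij => ?_
        calc m.d (xn j) y ≤ (m.d (xn j) y - φ (xn j)) + φ (xn j) := le_tsub_add
          _ ≤ dbar φ (fun z => m.d z y) + j.1.2 :=
              add_le_add (le_iSup (fun z => m.d z y - φ z) (xn j)) (le_of_lt j.2.1)
          _ ≤ dbar φ (fun z => m.d z y) + i.1.2 :=
              add_le_add_right (le_trans le_self_add hij) _
      refine le_trans step ?_
      rw [← ENNReal.add_iInf, hradinf, add_zero]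
  have hlower : φ a ≤ ⨅ i : ι', ⨆ j, ⨆ _ : le' i j, m.d a (xn j) := by
    refine le_iInf fun i => ENNReal.le_of_forall_pos_le_add fun ε hε _ => ?_
    obtain ⟨j, hij, hjε⟩ := hrefine i ε (ENNReal.coe_pos.mpr hε)
    calc φ a ≤ φ (xn j) + m.d a (xn j) := hw a (xn j)
      _ ≤ ε + ⨆ j, ⨆ _ : le' i j, m.d a (xn j) :=
          add_le_add (le_trans (le_of_lt j.2.1) hjε)
            (le_iSup₂ (f := fun j (_ : le' i j) => m.d a (xn j)) j hij)
      _ = (⨆ j, ⨆ _ : le' i j, m.d a (xn j)) + ε := add_comm _ _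
  have hkey := hcomp ι' le' xn c hfc hyl
  refine le_antisymm (hle a) ?_
  rw [hkey]
  exact hlower
end Stmt18
/-- An element is compact iff d(a, colim φ) = φ(a) for every flat weight φ with a colimit. -/
theorem stmt18 (m : GMetric X) (a : X) :
    IsCompactElem m a ↔
      ∀ φ : X → ℝ≥0∞, FlatWeight m φ → ∀ c : X, IsColimit m φ c → m.d a c = φ a := by
  constructor
  · intro hcomp φ hφ c hc
    exact Stmt18.forward m a hcomp φ hφ c hc
  · intro h ι le x b hfc hyl
    exact h _ (Stmt18.netW_flat hfc) b (Stmt18.netW_colimit hfc hyl)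
end

section
/- An element b of a metric space (X,d) is compact if and only if for every r ∈ [0,∞], the map x ↦ r ⊖ d(b,x) is a Scott weight of (X,d). -/
open ENNReal

universe u

variable {X : Type u}

/-- An element b is compact iff x ↦ r ⊖ d(b,x) is a Scott weight for every r ∈ [0,∞]. -/
theorem stmt19 (m : GMetric X) (b : X) :
    IsCompactElem m b ↔ ∀ r : ℝ≥0∞, ScottWeight m (fun x => r - m.d b x) := by
  have hweight : ∀ r : ℝ≥0∞, IsWeight m (fun x => r - m.d b x) := by
    intro r x y
    have h1 : m.d b y ≤ m.d b x + m.d x y := m.triangle b x y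
    rw [tsub_le_iff_right]
    calc r ≤ r - m.d b y + m.d b y := le_tsub_add
    _ ≤ r - m.d b y + (m.d b x + m.d x y) := add_le_add_right h1 _
    _ = r - m.d b y + m.d x y + m.d b x := by ring
  constructor
  · intro hc r
    refine ⟨hweight r, fun ι le x a hfc hyl => ?_⟩
    obtain ⟨⟨hne, hrefl, htrans, hdir⟩, hC⟩ := hfc
    have hca := hc ι le x a ⟨⟨hne, hrefl, htrans, hdir⟩, hC⟩ hyl
    refine le_iInf fun i => ?_
    have h1 : (⨅ j, ⨅ _ : le i j, m.d b (x j)) ≤ m.d b a := by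
      rw [hca]
      refine le_iInf fun i' => ?_
      obtain ⟨k, hik, hi'k⟩ := hdir i i'
      exact (iInf₂_le k hik).trans (le_iSup₂ (f := fun j (_ : le i' j) => m.d b (x j)) k hi'k)
    calc r - m.d b a ≤ r - ⨅ j, ⨅ _ : le i j, m.d b (x j) := tsub_le_tsub_left h1 r
    _ = ⨆ j, (r - ⨅ _ : le i j, m.d b (x j)) := ENNReal.sub_iInf
    _ ≤ ⨆ j, ⨆ _ : le i j, (r - m.d b (x j)) :=
        iSup_mono fun j => le_of_eq ENNReal.sub_iInf
  · intro h ι le x a hfc hyl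
    obtain ⟨⟨hne, hrefl, htrans, hdir⟩, hC⟩ := hfc
    haveI : Nonempty ι := hne
    set S : ι → ℝ≥0∞ := fun i => ⨆ j, ⨆ _ : le i j, m.d b (x j) with hS
    set I : ι → ℝ≥0∞ := fun i => ⨅ j, ⨅ _ : le i j, m.d b (x j) with hI
    set C : ι → ℝ≥0∞ := fun i => ⨆ j, ⨆ _ : le i j, ⨆ k, ⨆ _ : le j k, m.d (x j) (x k) with hCdef
    set L : ℝ≥0∞ := ⨆ i, I i with hL
    apply le_antisymm
    · refine le_iInf fun i => ?_
      have hT : (⨅ i', ⨆ j, ⨆ _ : le i' j, m.d (x j) a) = 0 := by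
        rw [← hyl a, m.refl]
      have h2 : m.d b a ≤ ⨅ i', (S i + ⨆ j, ⨆ _ : le i' j, m.d (x j) a) := by
        refine le_iInf fun i' => ?_
        obtain ⟨k, hik, hi'k⟩ := hdir i i'
        calc m.d b a ≤ m.d b (x k) + m.d (x k) a := m.triangle b (x k) a
        _ ≤ S i + ⨆ j, ⨆ _ : le i' j, m.d (x j) a :=
            add_le_add (le_iSup₂ (f := fun j (_ : le i j) => m.d b (x j)) k hik)
              (le_iSup₂ (f := fun j (_ : le i' j) => m.d (x j) a) k hi'k)
      rwa [← ENNReal.add_iInf, hT, add_zero] at h2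
    · -- limsup ≤ L
      have h1 : ∀ i, (⨅ i', S i') ≤ I i + C i := by
        intro i
        rw [← tsub_le_iff_right]
        refine le_iInf fun j => le_iInf fun hij => ?_
        rw [tsub_le_iff_right]
        calc (⨅ i', S i') ≤ S j := iInf_le _ j
        _ ≤ m.d b (x j) + C i := by
            refine iSup₂_le fun k hjk => ?_
            refine (m.triangle b (x j) (x k)).trans (add_le_add_right ?_ _)
            exact le_iSup_of_le j (le_iSup_of_le hij (le_iSup_of_le k (le_iSup_of_le hjk le_rfl)))
      have h2 : (⨅ i', S i') ≤ L := by
        have h3 : (⨅ i', S i') ≤ ⨅ i, (L + C i) :=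
          le_iInf fun i => (h1 i).trans (add_le_add_left (le_iSup _ i) _)
        rwa [← ENNReal.add_iInf, hC, add_zero] at h3
      refine h2.trans ?_
      -- L ≤ d b a via Scott weight
      by_contra hlt
      push_neg at hlt
      have hfin : m.d b a ≠ ∞ := hlt.trans_le le_top |>.ne
      set r : ℝ≥0∞ := min L (m.d b a + 1) with hr
      have hrle : r ≤ L := min_le_left _ _
      have hrlt : m.d b a < r := lt_min hlt (ENNReal.lt_add_right hfin one_ne_zero)
      have hrfin : r ≠ ∞ := ((min_le_right _ _).trans_lt (by
        simpa [lt_top_iff_ne_top, ENNReal.add_eq_top] using hfin)).ne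
      have hs := (h r).2 ι le x a ⟨⟨hne, hrefl, htrans, hdir⟩, hC⟩ hyl
      have h4 : (⨅ i, ⨆ j, ⨆ _ : le i j, (r - m.d b (x j))) ≤ r - L := by
        rw [hL, ENNReal.sub_iSup hrfin]
        refine iInf_mono fun i => ?_
        rw [hI]
        rw [ENNReal.sub_iInf]
        exact iSup_mono fun j => le_of_eq ENNReal.sub_iInf.symm
      have h5 : r - m.d b a = 0 :=
        le_antisymm (hs.trans (h4.trans_eq (tsub_eq_zero_of_le hrle))) zero_le
      exact absurd h5 (tsub_pos_of_lt hrlt).ne'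
end
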